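/- arXiv:1006.3487 — 2 statements merged into one kernel-verified Lean document; each statement's English description precedes it below -/
import Mathlib

section
/- For every n ≥ 1 and every choice of positive parameters a, the polytope Ass_n^{III}(a) has exactly n unordered pairs of distinct parallel facets, namely, for i = 1, …, n, the pair consisting of the facet maximizing the functional with first i coordinates 1 and last n+1−i coordinates 0, and the facet maximizing its negative. -/
open Finset

/-- Cyclic adjacency of vertex labels of the convex `m`-gon. -/
def adjacent (m : ℕ) (a b : Fin m) : Prop :=
  (a.val + 1) % m = b.val ∨ (b.val + 1) % m = a.val

/-- A diagonal of the labeled `m`-gon: an unordered pair of distinct,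
non cyclically adjacent labels. -/
def IsDiagonal (m : ℕ) (d : Finset (Fin m)) : Prop :=
  ∃ a b : Fin m, a ≠ b ∧ ¬ adjacent m a b ∧ d = {a, b}

/-- Two diagonals cross iff their endpoints alternate in cyclic order
(equivalently, exactly one endpoint of the second lies strictly between
the two endpoints of the first). -/
def Crosses (m : ℕ) (d e : Finset (Fin m)) : Prop :=
  ∃ p q r s : Fin m, p < q ∧ q < r ∧ r < s ∧
    ((d = {p, r} ∧ e = {q, s}) ∨ (d = {q, s} ∧ e = {p, r}))

/-- A triangulation: a maximal set of pairwise non-crossing diagonals. -/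
def IsTriangulation (m : ℕ) (t : Finset (Finset (Fin m))) : Prop :=
  (∀ d ∈ t, IsDiagonal m d) ∧
  (∀ d ∈ t, ∀ e ∈ t, ¬ Crosses m d e) ∧
  (∀ d, IsDiagonal m d → (∀ e ∈ t, ¬ Crosses m d e) → d ∈ t)

/-- The pair `{a, b}` is a polygon edge (cyclically adjacent labels) or a
diagonal belonging to `t`. -/
def edgeOrDiag (m : ℕ) (t : Finset (Finset (Fin m))) (a b : Fin m) : Prop :=
  adjacent m a b ∨ ({a, b} : Finset (Fin m)) ∈ t

/-- Area of the triangle with vertices `p`, `q`, `r` in the plane. -/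
noncomputable def triArea (p q r : ℝ × ℝ) : ℝ :=
  |(q.1 - p.1) * (r.2 - p.2) - (r.1 - p.1) * (q.2 - p.2)| / 2

open Classical in
/-- The GKZ vector of a triangulation `t`: its `i`-th coordinate is the sum of
the areas of the triangles of `t` containing the vertex `i`. -/
noncomputable def gkz (m : ℕ) (q : Fin m → ℝ × ℝ) (t : Finset (Finset (Fin m))) :
    Fin m → ℝ := fun i =>
  ∑ a : Fin m, ∑ b : Fin m, ∑ c : Fin m,
    if a < b ∧ b < c ∧ edgeOrDiag m t a b ∧ edgeOrDiag m t b c ∧ edgeOrDiag m t a c ∧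
        (i = a ∨ i = b ∨ i = c)
    then triArea (q a) (q b) (q c) else 0

/-- The points `q 0, …, q (m-1)` are in strictly convex position, labeled
counterclockwise: every triple of labels in increasing order is positively oriented. -/
def ConvexCCW (m : ℕ) (q : Fin m → ℝ × ℝ) : Prop :=
  ∀ i j k : Fin m, i < j → j < k →
    0 < ((q j).1 - (q i).1) * ((q k).2 - (q i).2) -
        ((q k).1 - (q i).1) * ((q j).2 - (q i).2)

/-- The secondary polytope of the convex polygon with vertices `q`. -/
noncomputable def secondary (m : ℕ) (q : Fin m → ℝ × ℝ) : Set (Fin m → ℝ) :=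
  convexHull ℝ {v | ∃ t, IsTriangulation m t ∧ v = gkz m q t}

def dot {k : ℕ} (w x : Fin k → ℝ) : ℝ := ∑ i, w i * x i

/-- The set of points of `P` maximizing the linear functional `⟨w, ·⟩`. -/
def maxFace {k : ℕ} (P : Set (Fin k → ℝ)) (w : Fin k → ℝ) : Set (Fin k → ℝ) :=
  {x ∈ P | ∀ y ∈ P, dot w y ≤ dot w x}

/-- A face of `P`: the set of points of `P` maximizing some linear functional. -/
def IsFaceOf {k : ℕ} (P F : Set (Fin k → ℝ)) : Prop :=
  ∃ w : Fin k → ℝ, F = maxFace P w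

/-- Linear span of the difference set of `F`. -/
def spanDiff {k : ℕ} (F : Set (Fin k → ℝ)) : Submodule ℝ (Fin k → ℝ) :=
  Submodule.span ℝ {z | ∃ u ∈ F, ∃ v ∈ F, z = u - v}

/-- Dimension of a set: the rank of the span of its difference set. -/
noncomputable def dimOf {k : ℕ} (F : Set (Fin k → ℝ)) : ℕ :=
  Module.finrank ℝ (spanDiff F)

/-- A facet: a face of dimension one less than the polytope. -/
def IsFacetOf {k : ℕ} (P F : Set (Fin k → ℝ)) : Prop :=
  IsFaceOf P F ∧ dimOf F + 1 = dimOf P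

/-- Two facets are parallel if the linear spans of their difference sets coincide. -/
def ParallelFaces {k : ℕ} (F F' : Set (Fin k → ℝ)) : Prop :=
  spanDiff F = spanDiff F'

/-- A vertex of `P`. -/
def vertexOf {k : ℕ} (P : Set (Fin k → ℝ)) (v : Fin k → ℝ) : Prop :=
  v ∈ P ∧ IsFaceOf P {v}

/-- The standard basis vector `e i` of `ℝ^k`. -/
noncomputable def eVec {k : ℕ} (i : Fin k) : Fin k → ℝ := Pi.single i 1

/-- The simple root `α i = e i − e (i+1)` of type `A n`. -/
noncomputable def simpleRoot (n : ℕ) (i : Fin n) : Fin (n+1) → ℝ :=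
  eVec i.castSucc - eVec i.succ

/-- Almost positive roots of type `A n`: positive roots together with the
negatives of the simple roots. -/
def AlmostPositive (n : ℕ) (β : Fin (n+1) → ℝ) : Prop :=
  (∃ i j : Fin (n+1), i < j ∧ β = eVec i - eVec j) ∨ (∃ i : Fin n, β = -simpleRoot n i)

/-- The `i`-th snake diagonal `δ_i = {⌈(i+1)/2⌉, n+2−⌊(i+1)/2⌋}` of the
`(n+3)`-gon (here `i : Fin n` is `0`-based). -/
def snake (n : ℕ) (i : Fin n) : Finset (Fin (n+3)) :=
  {⟨(i.val + 2) / 2, by have := i.isLt; omega⟩, ⟨n + 2 - (i.val + 1) / 2, by omega⟩}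

/-- The correspondence between almost positive roots and diagonals of the
`(n+3)`-gon: `−α i` corresponds to the snake diagonal `δ i`, and the positive
root `α i + ⋯ + α j = e i − e (j+1)` corresponds to the unique diagonal crossing
exactly the snake diagonals `δ i, …, δ j`. -/
def RootDiag (n : ℕ) (β : Fin (n+1) → ℝ) (d : Finset (Fin (n+3))) : Prop :=
  (∃ i : Fin n, β = -simpleRoot n i ∧ d = snake n i) ∨
  (∃ i j : Fin n, i ≤ j ∧ β = eVec i.castSucc - eVec j.succ ∧ IsDiagonal (n+3) d ∧
    ∀ k : Fin n, (Crosses (n+3) d (snake n k) ↔ i ≤ k ∧ k ≤ j))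

/-- Two almost positive roots are compatible if their corresponding diagonals
do not cross. -/
def Compatible (n : ℕ) (β γ : Fin (n+1) → ℝ) : Prop :=
  ∀ d e : Finset (Fin (n+3)), RootDiag n β d → RootDiag n γ e → ¬ Crosses (n+3) d e

/-- A cluster of type `A n`: a maximal set of pairwise compatible almost
positive roots. -/
def IsCluster (n : ℕ) (C : Finset (Fin (n+1) → ℝ)) : Prop :=
  (∀ β ∈ C, AlmostPositive n β) ∧
  (∀ β ∈ C, ∀ γ ∈ C, Compatible n β γ) ∧
  (∀ β, AlmostPositive n β → (∀ γ ∈ C, Compatible n β γ) → β ∈ C)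

/-- The cone of nonnegative linear combinations of the elements of `C`. -/
def coneOf (n : ℕ) (C : Finset (Fin (n+1) → ℝ)) : Set (Fin (n+1) → ℝ) :=
  {x | ∃ c : (Fin (n+1) → ℝ) → ℝ, (∀ β ∈ C, 0 ≤ c β) ∧ x = ∑ β ∈ C, c β • β}

/-- The normal cone of `P` at `v`, taken within the hyperplane
`H = {x : ∑ i, x i = 0}`. -/
def normalConeIn (n : ℕ) (P : Set (Fin (n+1) → ℝ)) (v : Fin (n+1) → ℝ) :
    Set (Fin (n+1) → ℝ) :=
  {w | (∑ i, w i = 0) ∧ ∀ x ∈ P, dot w x ≤ dot w v}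

/-- A cluster-fan polytope of type `A n`: a polytope contained in the
hyperplane `H`, of dimension `n`, whose vertex normal cones within `H` are
exactly the cones spanned by the clusters of type `A n`. -/
def IsClusterFanPolytope (n : ℕ) (P : Set (Fin (n+1) → ℝ)) : Prop :=
  (∃ V : Finset (Fin (n+1) → ℝ), P = convexHull ℝ (V : Set (Fin (n+1) → ℝ))) ∧
  (∀ x ∈ P, ∑ i, x i = 0) ∧
  dimOf P = n ∧
  {S : Set (Fin (n+1) → ℝ) | ∃ v, vertexOf P v ∧ S = normalConeIn n P v} =
    {S : Set (Fin (n+1) → ℝ) |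
      ∃ C : Finset (Fin (n+1) → ℝ), IsCluster n C ∧ S = coneOf n C}

/-- The simplex `Δ_{[i,…,j]} = conv{e i, …, e j} ⊂ ℝ^{n+1}`. -/
noncomputable def stdSimplexSeg (n : ℕ) (i j : Fin (n+1)) : Set (Fin (n+1) → ℝ) :=
  convexHull ℝ {x | ∃ k : Fin (n+1), i ≤ k ∧ k ≤ j ∧ x = eVec k}

/-- Index set of the pairs `1 ≤ i ≤ j ≤ n+1`. -/
def pairIdx (n : ℕ) : Finset (Fin (n+1) × Fin (n+1)) :=
  Finset.univ.filter (fun p => p.1 ≤ p.2)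

/-- The associahedron `Ass_n^{III}(a)`: the Minkowski sum
`∑_{i ≤ j} a_{ij} Δ_{[i,…,j]}`. -/
noncomputable def AssIII (n : ℕ) (a : Fin (n+1) × Fin (n+1) → ℝ) :
    Set (Fin (n+1) → ℝ) :=
  {x | ∃ f : Fin (n+1) × Fin (n+1) → Fin (n+1) → ℝ,
    (∀ p ∈ pairIdx n, f p ∈ stdSimplexSeg n p.1 p.2) ∧
    x = ∑ p ∈ pairIdx n, a p • f p}

/-- The functional with first `i` coordinates `1`, the rest `0`. -/
def wFun (n : ℕ) (i : ℕ) : Fin (n+1) → ℝ := fun k => if (k : ℕ) < i then 1 else 0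
/-! ### Auxiliary development -/

namespace AssAux

variable {n : ℕ}

lemma eVec_apply {k : ℕ} (i m : Fin k) : eVec i m = if m = i then 1 else 0 := by
  simp [eVec, Pi.single_apply]

lemma sum_eVec {k : ℕ} (i : Fin k) : ∑ m, eVec i m = 1 := by
  simp [eVec]

lemma sum_smul_eVec {k : ℕ} (x : Fin k → ℝ) : ∑ m, x m • eVec m = x := by
  funext j
  have : ∀ m : Fin k, (x m • eVec m) j = if j = m then x m else 0 := by
    intro m
    simp only [Pi.smul_apply, eVec_apply, smul_eq_mul, mul_ite, mul_one, mul_zero]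
  simp only [Finset.sum_apply, this]
  simp

lemma dot_eVec {k : ℕ} (v : Fin k → ℝ) (i : Fin k) : dot v (eVec i) = v i := by
  simp [dot, eVec_apply, mul_ite]

/-- `dot v` as a linear map. -/
noncomputable def dotL {k : ℕ} (v : Fin k → ℝ) : (Fin k → ℝ) →ₗ[ℝ] ℝ where
  toFun x := dot v x
  map_add' x y := by simp [dot, mul_add, Finset.sum_add_distrib]
  map_smul' c x := by
    simp [dot, Finset.mul_sum]
    ring_nf
    exact Finset.sum_congr rfl (fun i _ => by ring)

@[simp] lemma dotL_apply {k : ℕ} (v x : Fin k → ℝ) : dotL v x = dot v x := rfl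

/-- Membership characterization of the simplex. -/
def IsSimp (p : Fin (n+1) × Fin (n+1)) (y : Fin (n+1) → ℝ) : Prop :=
  (∀ m, 0 ≤ y m) ∧ (∀ m, y m ≠ 0 → p.1 ≤ m ∧ m ≤ p.2) ∧ ∑ m, y m = 1

lemma simplex_eq (p : Fin (n+1) × Fin (n+1)) :
    stdSimplexSeg n p.1 p.2 = {y | IsSimp p y} := by
  apply le_antisymm
  · apply convexHull_min
    · rintro y ⟨m, h1, h2, rfl⟩
      refine ⟨fun j => by simp [eVec_apply]; split <;> norm_num, fun j hj => ?_, sum_eVec m⟩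
      have : j = m := by
        by_contra hne; exact hj (by simp [eVec_apply, hne])
      exact this ▸ ⟨h1, h2⟩
    · rintro y ⟨hy0, hys, hy1⟩ z ⟨hz0, hzs, hz1⟩ s t hs ht hst
      refine ⟨fun m => by have := hy0 m; have := hz0 m; simp; positivity,
        fun m hm => ?_, ?_⟩
      · by_cases h1 : y m ≠ 0
        · exact hys m h1
        · push_neg at h1
          by_cases h2 : z m ≠ 0
          · exact hzs m h2
          · push_neg at h2
            exact absurd (by simp [h1, h2]) hm
      · simp only [Pi.add_apply, Pi.smul_apply, smul_eq_mul]
        rw [Finset.sum_add_distrib, ← Finset.mul_sum, ← Finset.mul_sum, hy1, hz1]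
        linarith
  · rintro y ⟨hy0, hys, hy1⟩
    classical
    have hfil : ∑ i ∈ Finset.univ.filter (fun m => y m ≠ 0), y i = 1 := by
      rw [Finset.sum_filter_ne_zero]; exact hy1
    have hmass : (Finset.univ.filter (fun m => y m ≠ 0)).centerMass y eVec = y := by
      rw [Finset.centerMass, hfil]
      rw [Finset.sum_subset (Finset.filter_subset _ _)
        (by intro i _ hi; simp only [Finset.mem_filter, Finset.mem_univ, true_and,
          not_not] at hi; simp [hi])]
      rw [sum_smul_eVec]; norm_num
    rw [stdSimplexSeg, ← hmass]
    refine Finset.centerMass_mem_convexHull _ (fun i _ => hy0 i) (by rw [hfil]; norm_num)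
      (fun i hi => ?_)
    have hi' : y i ≠ 0 := by simpa using hi
    exact ⟨i, (hys i hi').1, (hys i hi').2, rfl⟩


lemma mem_pairIdx {p : Fin (n+1) × Fin (n+1)} : p ∈ pairIdx n ↔ p.1 ≤ p.2 := by
  simp [pairIdx]

lemma q0_mem : ((0, Fin.last n) : Fin (n+1) × Fin (n+1)) ∈ pairIdx n := by
  simp [mem_pairIdx, Fin.le_def]

variable {a : Fin (n+1) × Fin (n+1) → ℝ}

lemma memP_iff {x : Fin (n+1) → ℝ} :
    x ∈ AssIII n a ↔ ∃ f : Fin (n+1) × Fin (n+1) → Fin (n+1) → ℝ,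
      (∀ p ∈ pairIdx n, IsSimp p (f p)) ∧ x = ∑ p ∈ pairIdx n, a p • f p := by
  constructor
  · rintro ⟨f, hf, rfl⟩
    exact ⟨f, fun p hp => by have := hf p hp; rwa [simplex_eq] at this, rfl⟩
  · rintro ⟨f, hf, rfl⟩
    exact ⟨f, fun p hp => by rw [simplex_eq]; exact hf p hp, rfl⟩

lemma dot_sum_rep (v : Fin (n+1) → ℝ) (f : Fin (n+1) × Fin (n+1) → Fin (n+1) → ℝ) :
    dot v (∑ p ∈ pairIdx n, a p • f p) = ∑ p ∈ pairIdx n, a p * dot v (f p) := by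
  rw [← dotL_apply, map_sum]
  exact Finset.sum_congr rfl (fun p _ => by simp [smul_eq_mul])

lemma sum_coords_of_mem {x : Fin (n+1) → ℝ} (hx : x ∈ AssIII n a) :
    ∑ m, x m = ∑ p ∈ pairIdx n, a p := by
  rcases memP_iff.1 hx with ⟨f, hf, rfl⟩
  have h1 : ∀ y : Fin (n+1) → ℝ, dot (fun _ => (1:ℝ)) y = ∑ m, y m := by
    intro y; simp [dot]
  rw [← h1, dot_sum_rep]
  exact Finset.sum_congr rfl (fun p hp => by rw [h1, (hf p hp).2.2, mul_one])

/-- The maximum of `w` over the interval `[p.1, p.2]`. -/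
noncomputable def mQ (w : Fin (n+1) → ℝ) (p : Fin (n+1) × Fin (n+1)) : ℝ :=
  if h : p.1 ≤ p.2 then
    (Finset.univ.filter (fun m => p.1 ≤ m ∧ m ≤ p.2)).sup'
      ⟨p.1, by simp [h]⟩ w
  else 0

lemma le_mQ {w : Fin (n+1) → ℝ} {p : Fin (n+1) × Fin (n+1)} (hp : p.1 ≤ p.2)
    {m : Fin (n+1)} (h1 : p.1 ≤ m) (h2 : m ≤ p.2) : w m ≤ mQ w p := by
  rw [mQ, dif_pos hp]
  exact Finset.le_sup' w (by simp [h1, h2])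

lemma exists_mQ {w : Fin (n+1) → ℝ} {p : Fin (n+1) × Fin (n+1)} (hp : p.1 ≤ p.2) :
    ∃ m : Fin (n+1), p.1 ≤ m ∧ m ≤ p.2 ∧ w m = mQ w p := by
  rw [mQ, dif_pos hp]
  obtain ⟨m, hm, hval⟩ := Finset.exists_mem_eq_sup'
    (⟨p.1, by simp [hp]⟩ : (Finset.univ.filter (fun m => p.1 ≤ m ∧ m ≤ p.2)).Nonempty) w
  simp only [Finset.mem_filter, Finset.mem_univ, true_and] at hm
  exact ⟨m, hm.1, hm.2, hval.symm⟩

lemma dot_le_mQ {w y : Fin (n+1) → ℝ} {p : Fin (n+1) × Fin (n+1)} (hp : p.1 ≤ p.2)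
    (hy : IsSimp p y) : dot w y ≤ mQ w p := by
  obtain ⟨hy0, hys, hy1⟩ := hy
  calc dot w y = ∑ m, w m * y m := rfl
    _ ≤ ∑ m, mQ w p * y m := by
        refine Finset.sum_le_sum (fun m _ => ?_)
        by_cases hm : y m = 0
        · simp [hm]
        · exact mul_le_mul_of_nonneg_right (le_mQ hp (hys m hm).1 (hys m hm).2) (hy0 m)
    _ = mQ w p := by rw [← Finset.mul_sum, hy1, mul_one]

lemma dot_eq_mQ {w y : Fin (n+1) → ℝ} {p : Fin (n+1) × Fin (n+1)}
    (hy : IsSimp p y) (hs : ∀ m, y m ≠ 0 → w m = mQ w p) : dot w y = mQ w p := by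
  calc dot w y = ∑ m, w m * y m := rfl
    _ = ∑ m, mQ w p * y m := by
        refine Finset.sum_congr rfl (fun m _ => ?_)
        by_cases hm : y m = 0
        · simp [hm]
        · rw [hs m hm]
    _ = mQ w p := by rw [← Finset.mul_sum, hy.2.2, mul_one]

lemma supp_of_dot_eq {w y : Fin (n+1) → ℝ} {p : Fin (n+1) × Fin (n+1)} (hp : p.1 ≤ p.2)
    (hy : IsSimp p y) (heq : dot w y = mQ w p) :
    ∀ m, y m ≠ 0 → w m = mQ w p := by
  obtain ⟨hy0, hys, hy1⟩ := hy
  have hz : ∑ m, (mQ w p - w m) * y m = 0 := by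
    have hd : ∑ m, w m * y m = mQ w p := heq
    have h2 : ∑ m, (mQ w p - w m) * y m
        = (∑ m, mQ w p * y m) - ∑ m, w m * y m := by
      rw [← Finset.sum_sub_distrib]
      exact Finset.sum_congr rfl (fun m _ => by ring)
    rw [h2, ← Finset.mul_sum, hy1, hd, mul_one, sub_self]
  have hnn : ∀ m ∈ Finset.univ, 0 ≤ (mQ w p - w m) * y m := by
    intro m _
    by_cases hm : y m = 0
    · simp [hm]
    · exact mul_nonneg (sub_nonneg.2 (le_mQ hp (hys m hm).1 (hys m hm).2)) (hy0 m)
  intro m hm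
  have := (Finset.sum_eq_zero_iff_of_nonneg hnn).1 hz m (Finset.mem_univ m)
  rcases mul_eq_zero.1 this with h | h
  · linarith [sub_eq_zero.1 h]
  · exact absurd h hm

/-- A representation certifying membership in the `w`-maximal face. -/
def FaceRep (w : Fin (n+1) → ℝ) (f : Fin (n+1) × Fin (n+1) → Fin (n+1) → ℝ) : Prop :=
  ∀ p ∈ pairIdx n, IsSimp p (f p) ∧ (∀ m, f p m ≠ 0 → w m = mQ w p)

lemma eVec_isSimp {p : Fin (n+1) × Fin (n+1)} {m : Fin (n+1)}
    (h1 : p.1 ≤ m) (h2 : m ≤ p.2) : IsSimp p (eVec m) := by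
  refine ⟨fun j => by rw [eVec_apply]; split <;> norm_num, fun j hj => ?_, sum_eVec m⟩
  have : j = m := by by_contra hne; exact hj (by simp [eVec_apply, hne])
  exact this ▸ ⟨h1, h2⟩

lemma exists_faceRep (w : Fin (n+1) → ℝ) : ∃ f, FaceRep (n := n) w f := by
  classical
  refine ⟨fun p => if h : p.1 ≤ p.2 then eVec (exists_mQ (w := w) h).choose else 0,
    fun p hp => ?_⟩
  have hp' : p.1 ≤ p.2 := mem_pairIdx.1 hp
  obtain ⟨h1, h2, h3⟩ := (exists_mQ (w := w) hp').choose_spec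
  simp only [dif_pos hp']
  refine ⟨eVec_isSimp h1 h2, fun m hm => ?_⟩
  have : m = (exists_mQ (w := w) hp').choose := by
    by_contra hne; exact hm (by simp [eVec_apply, hne])
  rw [this]; exact h3

/-- The maximal value of `dot w` on `AssIII n a`. -/
noncomputable def maxVal (a : Fin (n+1) × Fin (n+1) → ℝ) (w : Fin (n+1) → ℝ) : ℝ :=
  ∑ p ∈ pairIdx n, a p * mQ w p

lemma dot_le_maxVal (ha : ∀ p : Fin (n+1) × Fin (n+1), p.1 ≤ p.2 → 0 < a p)
    {w x : Fin (n+1) → ℝ} (hx : x ∈ AssIII n a) : dot w x ≤ maxVal a w := by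
  rcases memP_iff.1 hx with ⟨f, hf, rfl⟩
  rw [dot_sum_rep, maxVal]
  refine Finset.sum_le_sum (fun p hp => ?_)
  have hp' := mem_pairIdx.1 hp
  exact mul_le_mul_of_nonneg_left (dot_le_mQ hp' (hf p hp)) (le_of_lt (ha p hp'))

lemma faceRep_sum_mem (ha : ∀ p : Fin (n+1) × Fin (n+1), p.1 ≤ p.2 → 0 < a p)
    {w : Fin (n+1) → ℝ} {f : Fin (n+1) × Fin (n+1) → Fin (n+1) → ℝ}
    (hf : FaceRep w f) :
    (∑ p ∈ pairIdx n, a p • f p) ∈ maxFace (AssIII n a) w := by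
  have hmem : (∑ p ∈ pairIdx n, a p • f p) ∈ AssIII n a :=
    memP_iff.2 ⟨f, fun p hp => (hf p hp).1, rfl⟩
  have hval : dot w (∑ p ∈ pairIdx n, a p • f p) = maxVal a w := by
    rw [dot_sum_rep, maxVal]
    exact Finset.sum_congr rfl (fun p hp =>
      by rw [dot_eq_mQ (hf p hp).1 (hf p hp).2])
  exact ⟨hmem, fun y hy => hval ▸ dot_le_maxVal ha hy⟩

lemma mem_maxFace_iff (ha : ∀ p : Fin (n+1) × Fin (n+1), p.1 ≤ p.2 → 0 < a p)
    {w x : Fin (n+1) → ℝ} :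
    x ∈ maxFace (AssIII n a) w ↔ x ∈ AssIII n a ∧ dot w x = maxVal a w := by
  constructor
  · rintro ⟨hxP, hmax⟩
    refine ⟨hxP, le_antisymm (dot_le_maxVal ha hxP) ?_⟩
    obtain ⟨f, hf⟩ := exists_faceRep (n := n) w
    have := faceRep_sum_mem ha hf
    calc maxVal a w = dot w (∑ p ∈ pairIdx n, a p • f p) := by
          rw [dot_sum_rep, maxVal]
          exact (Finset.sum_congr rfl (fun p hp =>
            by rw [dot_eq_mQ (hf p hp).1 (hf p hp).2])).symm
      _ ≤ dot w x := hmax _ this.1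
  · rintro ⟨hxP, hval⟩
    exact ⟨hxP, fun y hy => hval ▸ dot_le_maxVal ha hy⟩

lemma mem_maxFace_iff_rep (ha : ∀ p : Fin (n+1) × Fin (n+1), p.1 ≤ p.2 → 0 < a p)
    {w x : Fin (n+1) → ℝ} :
    x ∈ maxFace (AssIII n a) w ↔
      ∃ f, FaceRep w f ∧ x = ∑ p ∈ pairIdx n, a p • f p := by
  constructor
  · intro hx
    obtain ⟨hxP, hval⟩ := (mem_maxFace_iff ha).1 hx
    rcases memP_iff.1 hxP with ⟨f, hf, rfl⟩
    rw [dot_sum_rep] at hval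
    have hterm : ∀ p ∈ pairIdx n, a p * dot w (f p) = a p * mQ w p := by
      have hz : ∑ p ∈ pairIdx n, (a p * mQ w p - a p * dot w (f p)) = 0 := by
        rw [Finset.sum_sub_distrib, hval, maxVal, sub_self]
      have hnn : ∀ p ∈ pairIdx n, 0 ≤ a p * mQ w p - a p * dot w (f p) := by
        intro p hp
        have hp' := mem_pairIdx.1 hp
        have := dot_le_mQ (w := w) hp' (hf p hp)
        nlinarith [ha p hp']
      intro p hp
      have := (Finset.sum_eq_zero_iff_of_nonneg hnn).1 hz p hp
      linarith
    refine ⟨f, fun p hp => ⟨hf p hp, ?_⟩, rfl⟩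
    have hp' := mem_pairIdx.1 hp
    have hne : a p ≠ 0 := ne_of_gt (ha p hp')
    have hdq : dot w (f p) = mQ w p := by
      have := hterm p hp
      field_simp at this
      tauto
    exact supp_of_dot_eq hp' (hf p hp) hdq
  · rintro ⟨f, hf, rfl⟩
    exact faceRep_sum_mem ha hf


/-- Linear functionals constant on a set kill its difference span. -/
lemma spanDiff_le_ker {k : ℕ} {F : Set (Fin k → ℝ)} {ψ : Fin k → ℝ}
    (h : ∀ u ∈ F, ∀ v ∈ F, dot ψ u = dot ψ v) :
    spanDiff F ≤ LinearMap.ker (dotL ψ) := by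
  rw [spanDiff, Submodule.span_le]
  rintro z ⟨u, hu, v, hv, rfl⟩
  simp only [SetLike.mem_coe, LinearMap.mem_ker, map_sub, dotL_apply, h u hu v hv, sub_self]

/-- A vector supported on `A` with zero coordinate sum lies in the span of the
differences of basis vectors indexed by `A`. -/
lemma mem_span_diffs {k : ℕ} (A : Finset (Fin k)) (x : Fin k → ℝ)
    (hsupp : ∀ m, x m ≠ 0 → m ∈ A) (hsum : ∑ m, x m = 0) :
    x ∈ Submodule.span ℝ {z : Fin k → ℝ | ∃ u ∈ A, ∃ v ∈ A, z = eVec u - eVec v} := by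
  rcases A.eq_empty_or_nonempty with rfl | ⟨a0, ha0⟩
  · have : x = 0 := by
      funext m
      by_contra hm
      exact absurd (hsupp m hm) (by simp)
    rw [this]; exact Submodule.zero_mem _
  · have hx : x = ∑ m, x m • (eVec m - eVec a0) := by
      have : ∑ m, x m • (eVec m - eVec a0)
          = (∑ m, x m • eVec m) - (∑ m, x m) • eVec a0 := by
        rw [Finset.sum_smul, ← Finset.sum_sub_distrib]
        exact Finset.sum_congr rfl (fun m _ => by rw [smul_sub])
      rw [this, hsum, zero_smul, sub_zero, sum_smul_eVec]
    rw [hx]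
    refine Submodule.sum_mem _ (fun m _ => ?_)
    by_cases hm : x m = 0
    · simp [hm]
    · exact Submodule.smul_mem _ _ (Submodule.subset_span ⟨m, hsupp m hm, a0, ha0, rfl⟩)

/-- Rank–nullity for a surjective map onto `ℝ^r`. -/
lemma finrank_ker_of_surj {k r : ℕ} (Φ : (Fin k → ℝ) →ₗ[ℝ] (Fin r → ℝ))
    (hs : Function.Surjective Φ) :
    Module.finrank ℝ (LinearMap.ker Φ) = k - r := by
  have h1 := LinearMap.finrank_range_add_finrank_ker Φ
  have h2 : LinearMap.range Φ = ⊤ := LinearMap.range_eq_top.2 hs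
  rw [h2] at h1
  have h3 : Module.finrank ℝ (⊤ : Submodule ℝ (Fin r → ℝ)) = r := by
    rw [finrank_top]; simp [Module.finrank_pi]
  have h4 : Module.finrank ℝ (Fin k → ℝ) = k := by simp [Module.finrank_pi]
  omega

/-- The 2-functional map associated to a subset `S`. -/
noncomputable def phi2 {k : ℕ} (S : Finset (Fin k)) : (Fin k → ℝ) →ₗ[ℝ] (Fin 2 → ℝ) :=
  LinearMap.pi ![dotL (fun m => if m ∈ S then 1 else 0),
    dotL (fun m => if m ∈ S then 0 else 1)]

lemma phi2_apply {k : ℕ} (S : Finset (Fin k)) (x : Fin k → ℝ) :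
    phi2 S x = ![∑ m ∈ S, x m, ∑ m ∈ Sᶜ, x m] := by
  have e1 : ∀ m, (if m ∈ S then (1:ℝ) else 0) * x m = if m ∈ S then x m else 0 := by
    intro m; by_cases h : m ∈ S <;> simp [h]
  have e2 : ∀ m, (if m ∈ S then (0:ℝ) else 1) * x m = if m ∈ Sᶜ then x m else 0 := by
    intro m; by_cases h : m ∈ S <;> simp [h]
  funext j
  fin_cases j
  · show (∑ m, (if m ∈ S then (1:ℝ) else 0) * x m) = ∑ m ∈ S, x m
    rw [Finset.sum_congr rfl (fun m _ => e1 m), Finset.sum_ite_mem, Finset.univ_inter]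
  · show (∑ m, (if m ∈ S then (0:ℝ) else 1) * x m) = ∑ m ∈ Sᶜ, x m
    rw [Finset.sum_congr rfl (fun m _ => e2 m), Finset.sum_ite_mem, Finset.univ_inter]

lemma mem_ker_phi2 {k : ℕ} (S : Finset (Fin k)) (x : Fin k → ℝ) :
    x ∈ LinearMap.ker (phi2 S) ↔ (∑ m ∈ S, x m = 0 ∧ ∑ m ∈ Sᶜ, x m = 0) := by
  rw [LinearMap.mem_ker, phi2_apply]
  constructor
  · intro h
    constructor
    · have := congrFun h 0; simpa using this
    · have := congrFun h 1; simpa using this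
  · rintro ⟨h1, h2⟩
    funext j; fin_cases j <;> simp [h1, h2]


/-- Indicator vector of a finite coordinate set. -/
def ind {k : ℕ} (S : Finset (Fin k)) : Fin k → ℝ := fun m => if m ∈ S then 1 else 0

lemma dot_ind {k : ℕ} (S : Finset (Fin k)) (y : Fin k → ℝ) :
    dot (ind S) y = ∑ m ∈ S, y m := by
  have e1 : ∀ m, ind S m * y m = if m ∈ S then y m else 0 := by
    intro m; by_cases h : m ∈ S <;> simp [ind, h]
  show (∑ m, ind S m * y m) = ∑ m ∈ S, y m
  rw [Finset.sum_congr rfl (fun m _ => e1 m), Finset.sum_ite_mem, Finset.univ_inter]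

/-- `A` is an interval of coordinates. -/
def IsItv {k : ℕ} (A : Finset (Fin k)) : Prop :=
  ∀ x y z : Fin k, x ∈ A → z ∈ A → x ≤ y → y ≤ z → y ∈ A

lemma mQ_ind {S : Finset (Fin (n+1))} {p : Fin (n+1) × Fin (n+1)} (hp : p.1 ≤ p.2) :
    mQ (ind S) p = if ∃ m, p.1 ≤ m ∧ m ≤ p.2 ∧ m ∈ S then 1 else 0 := by
  obtain ⟨m0, hm1, hm2, hm3⟩ := exists_mQ (w := ind S) hp
  split
  · next h =>
      obtain ⟨m, h1, h2, h3⟩ := h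
      refine le_antisymm ?_ ?_
      · rw [← hm3, ind]; split <;> norm_num
      · have := le_mQ (w := ind S) hp h1 h2
        rwa [ind, if_pos h3] at this
  · next h =>
      push_neg at h
      have : m0 ∉ S := fun hc => by
        have := h m0 hm1 hm2; exact this hc
      rw [← hm3, ind, if_neg this]

/-- `dot (ind S)` is constant on the face maximizing `w`, provided `S` is the
argmax set of `w`. -/
lemma dot_argmax_const (ha : ∀ p : Fin (n+1) × Fin (n+1), p.1 ≤ p.2 → 0 < a p)
    {w : Fin (n+1) → ℝ} {W : ℝ} (hW : ∀ m, w m ≤ W)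
    {S : Finset (Fin (n+1))} (hSdef : ∀ m, m ∈ S ↔ w m = W) :
    ∀ x ∈ maxFace (AssIII n a) w,
      dot (ind S) x = ∑ p ∈ pairIdx n,
        a p * (if ∃ m, p.1 ≤ m ∧ m ≤ p.2 ∧ m ∈ S then 1 else 0) := by
  intro x hx
  obtain ⟨f, hf, rfl⟩ := (mem_maxFace_iff_rep ha).1 hx
  rw [dot_sum_rep]
  refine Finset.sum_congr rfl (fun p hp => ?_)
  have hp' := mem_pairIdx.1 hp
  obtain ⟨hsimp, hsupp⟩ := hf p hp
  congr 1
  rw [dot_ind]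
  split
  · next h =>
      obtain ⟨m, h1, h2, h3⟩ := h
      have hmQW : mQ w p = W := by
        refine le_antisymm ?_ ?_
        · obtain ⟨m', _, _, hm'⟩ := exists_mQ (w := w) hp'
          rw [← hm']; exact hW m'
        · rw [← (hSdef m).1 h3]; exact le_mQ hp' h1 h2
      rw [Finset.sum_subset (Finset.subset_univ S) ?_, hsimp.2.2]
      intro m' _ hm'S
      by_contra hne
      exact hm'S ((hSdef m').2 (by rw [hsupp m' hne, hmQW]))
  · next h =>
      push_neg at h
      refine Finset.sum_eq_zero (fun m hm => ?_)
      by_contra hne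
      exact (h m (hsimp.2.1 m hne).1 (hsimp.2.1 m hne).2) hm

lemma spanDiff_maxFace_le_ker (ha : ∀ p : Fin (n+1) × Fin (n+1), p.1 ≤ p.2 → 0 < a p)
    {w : Fin (n+1) → ℝ} {W : ℝ} (hW : ∀ m, w m ≤ W)
    {S : Finset (Fin (n+1))} (hSdef : ∀ m, m ∈ S ↔ w m = W) :
    spanDiff (maxFace (AssIII n a) w) ≤ LinearMap.ker (phi2 S) := by
  rw [spanDiff, Submodule.span_le]
  rintro z ⟨u, hu, v, hv, rfl⟩
  have hcS : dot (ind S) u = dot (ind S) v := by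
    rw [dot_argmax_const ha hW hSdef u hu, dot_argmax_const ha hW hSdef v hv]
  have hc1 : ∑ m, u m = ∑ m, v m := by
    rw [sum_coords_of_mem hu.1, sum_coords_of_mem hv.1]
  rw [SetLike.mem_coe, mem_ker_phi2]
  rw [dot_ind, dot_ind] at hcS
  constructor
  · simp only [Pi.sub_apply, Finset.sum_sub_distrib, hcS, sub_self]
  · have h2 : ∀ y : Fin (n+1) → ℝ, ∑ m ∈ Sᶜ, y m = (∑ m, y m) - ∑ m ∈ S, y m := by
      intro y
      rw [eq_sub_iff_add_eq, Finset.sum_compl_add_sum]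
    simp only [Pi.sub_apply, Finset.sum_sub_distrib, h2, hcS, hc1, sub_self]

/-- Differences of admissible vertices lie in the difference span of the face. -/
lemma diff_mem_spanDiff (ha : ∀ p : Fin (n+1) × Fin (n+1), p.1 ≤ p.2 → 0 < a p)
    {w : Fin (n+1) → ℝ} {p : Fin (n+1) × Fin (n+1)} (hp : p ∈ pairIdx n)
    {b c : Fin (n+1)} (hb1 : p.1 ≤ b) (hb2 : b ≤ p.2) (hc1 : p.1 ≤ c) (hc2 : c ≤ p.2)
    (hwb : w b = mQ w p) (hwc : w c = mQ w p) :
    eVec b - eVec c ∈ spanDiff (maxFace (AssIII n a) w) := by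
  classical
  obtain ⟨f, hf⟩ := exists_faceRep (n := n) w
  have hrep : ∀ d : Fin (n+1), p.1 ≤ d → d ≤ p.2 → w d = mQ w p →
      FaceRep w (Function.update f p (eVec d)) := by
    intro d h1 h2 h3 q hq
    by_cases hqp : q = p
    · subst hqp
      rw [Function.update_self]
      refine ⟨eVec_isSimp h1 h2, fun m hm => ?_⟩
      have : m = d := by by_contra hne; exact hm (by simp [eVec_apply, hne])
      rw [this]; exact h3
    · rw [Function.update_of_ne hqp]; exact hf q hq
  set u := ∑ q ∈ pairIdx n, a q • Function.update f p (eVec b) q with hu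
  set v := ∑ q ∈ pairIdx n, a q • Function.update f p (eVec c) q with hv
  have hub : u ∈ maxFace (AssIII n a) w :=
    (mem_maxFace_iff_rep ha).2 ⟨_, hrep b hb1 hb2 hwb, rfl⟩
  have hvb : v ∈ maxFace (AssIII n a) w :=
    (mem_maxFace_iff_rep ha).2 ⟨_, hrep c hc1 hc2 hwc, rfl⟩
  have hdiff : u - v = a p • (eVec b - eVec c) := by
    rw [hu, hv, ← Finset.sum_sub_distrib]
    rw [Finset.sum_eq_single_of_mem p hp ?_]
    · rw [Function.update_self, Function.update_self, ← smul_sub]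
    · intro q _ hqp
      rw [Function.update_of_ne hqp, Function.update_of_ne hqp, sub_self]
  have hmem : u - v ∈ spanDiff (maxFace (AssIII n a) w) :=
    Submodule.subset_span ⟨u, hub, v, hvb, rfl⟩
  have hap : a p ≠ 0 := ne_of_gt (ha p (mem_pairIdx.1 hp))
  have : eVec b - eVec c = (a p)⁻¹ • (u - v) := by
    rw [hdiff, smul_smul, inv_mul_cancel₀ hap, one_smul]
  rw [this]
  exact Submodule.smul_mem _ _ hmem

lemma ker_le_spanDiff_maxFace (ha : ∀ p : Fin (n+1) × Fin (n+1), p.1 ≤ p.2 → 0 < a p)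
    {S : Finset (Fin (n+1))} (hS : S.Nonempty) (hT : IsItv Sᶜ) :
    LinearMap.ker (phi2 S) ≤ spanDiff (maxFace (AssIII n a) (ind S)) := by
  intro x hx
  obtain ⟨hx1, hx2⟩ := (mem_ker_phi2 S x).1 hx
  have hq0 : mQ (ind S) ((0, Fin.last n) : Fin (n+1) × Fin (n+1)) = 1 := by
    rw [mQ_ind (by exact Fin.le_last _), if_pos]
    obtain ⟨s, hs⟩ := hS
    exact ⟨s, Fin.zero_le s, Fin.le_last s, hs⟩
  have hgenS : ∀ u ∈ S, ∀ v ∈ S,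
      eVec u - eVec v ∈ spanDiff (maxFace (AssIII n a) (ind S)) := by
    intro u hu v hv
    refine diff_mem_spanDiff ha q0_mem (Fin.zero_le u) (Fin.le_last u)
      (Fin.zero_le v) (Fin.le_last v) ?_ ?_ <;>
      rw [hq0, ind] <;> simp [hu, hv]
  have hgenT : ∀ u ∈ Sᶜ, ∀ v ∈ Sᶜ,
      eVec u - eVec v ∈ spanDiff (maxFace (AssIII n a) (ind S)) := by
    intro u hu v hv
    rcases le_total u v with huv | huv
    · have hpair : ((u, v) : Fin (n+1) × Fin (n+1)) ∈ pairIdx n := mem_pairIdx.2 huv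
      have hmq : mQ (ind S) ((u, v) : Fin (n+1) × Fin (n+1)) = 0 := by
        rw [mQ_ind huv, if_neg]
        rintro ⟨m, h1, h2, h3⟩
        exact (Finset.mem_compl.1 (hT u m v hu hv h1 h2)) h3
      refine diff_mem_spanDiff ha hpair (le_refl u) huv huv (le_refl v) ?_ ?_ <;>
        rw [hmq, ind] <;> simp [Finset.mem_compl.1 hu, Finset.mem_compl.1 hv]
    · have hpair : ((v, u) : Fin (n+1) × Fin (n+1)) ∈ pairIdx n := mem_pairIdx.2 huv
      have hmq : mQ (ind S) ((v, u) : Fin (n+1) × Fin (n+1)) = 0 := by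
        rw [mQ_ind huv, if_neg]
        rintro ⟨m, h1, h2, h3⟩
        exact (Finset.mem_compl.1 (hT v m u hv hu h1 h2)) h3
      refine diff_mem_spanDiff ha hpair huv (le_refl u) (le_refl v) huv ?_ ?_ <;>
        rw [hmq, ind] <;> simp [Finset.mem_compl.1 hu, Finset.mem_compl.1 hv]
  -- split x into its `S` part and its `Sᶜ` part
  classical
  set xS : Fin (n+1) → ℝ := fun m => if m ∈ S then x m else 0 with hxS
  set xT : Fin (n+1) → ℝ := fun m => if m ∈ S then 0 else x m with hxT
  have hsplit : x = xS + xT := by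
    funext m; by_cases h : m ∈ S <;> simp [hxS, hxT, h]
  have hxSmem : xS ∈ spanDiff (maxFace (AssIII n a) (ind S)) := by
    have := mem_span_diffs S xS
      (fun m hm => by by_contra h; exact hm (by simp [hxS, h]))
      (by rw [hxS]; simp only [Finset.sum_ite_mem, Finset.univ_inter]; exact hx1)
    refine Submodule.span_le.2 ?_ this
    rintro z ⟨u, hu, v, hv, rfl⟩
    exact hgenS u hu v hv
  have hxTmem : xT ∈ spanDiff (maxFace (AssIII n a) (ind S)) := by
    have hsum : ∑ m, xT m = 0 := by
      have : ∀ m, xT m = if m ∈ Sᶜ then x m else 0 := by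
        intro m; by_cases h : m ∈ S <;> simp [hxT, h]
      rw [Finset.sum_congr rfl (fun m _ => this m)]
      simp only [Finset.sum_ite_mem, Finset.univ_inter]
      exact hx2
    have := mem_span_diffs Sᶜ xT
      (fun m hm => by
        by_contra h
        rw [Finset.mem_compl, not_not] at h
        exact hm (by simp [hxT, h]))
      hsum
    refine Submodule.span_le.2 ?_ this
    rintro z ⟨u, hu, v, hv, rfl⟩
    exact hgenT u hu v hv
  rw [hsplit]
  exact Submodule.add_mem _ hxSmem hxTmem


lemma ind_le_one {k : ℕ} (S : Finset (Fin k)) : ∀ m, ind S m ≤ 1 := by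
  intro m; rw [ind]; split <;> norm_num

lemma ind_eq_one_iff {k : ℕ} (S : Finset (Fin k)) : ∀ m, m ∈ S ↔ ind S m = 1 := by
  intro m
  constructor
  · intro h; rw [ind, if_pos h]
  · intro h
    by_contra hc
    rw [ind, if_neg hc] at h
    norm_num at h

lemma spanDiff_maxFace_ind_eq (ha : ∀ p : Fin (n+1) × Fin (n+1), p.1 ≤ p.2 → 0 < a p)
    {S : Finset (Fin (n+1))} (hS : S.Nonempty) (hT : IsItv Sᶜ) :
    spanDiff (maxFace (AssIII n a) (ind S)) = LinearMap.ker (phi2 S) :=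
  le_antisymm (spanDiff_maxFace_le_ker ha (ind_le_one S) (ind_eq_one_iff S))
    (ker_le_spanDiff_maxFace ha hS hT)

lemma sum_eVec_mem {k : ℕ} (A : Finset (Fin k)) (i : Fin k) :
    ∑ m ∈ A, eVec i m = if i ∈ A then 1 else 0 := by
  simp [eVec_apply]

lemma phi2_surj {k : ℕ} {S : Finset (Fin k)} (hS : S.Nonempty) (hT : Sᶜ.Nonempty) :
    Function.Surjective (phi2 S) := by
  obtain ⟨s, hs⟩ := hS
  obtain ⟨t, ht⟩ := hT
  have hts : t ∉ S := Finset.mem_compl.1 ht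
  intro y
  refine ⟨y 0 • eVec s + y 1 • eVec t, ?_⟩
  rw [phi2_apply]
  funext j
  fin_cases j
  · show (∑ m ∈ S, (y 0 • eVec s + y 1 • eVec t) m) = y 0
    simp only [Pi.add_apply, Pi.smul_apply, smul_eq_mul, Finset.sum_add_distrib,
      ← Finset.mul_sum, sum_eVec_mem, if_pos hs, if_neg hts]
    ring
  · show (∑ m ∈ Sᶜ, (y 0 • eVec s + y 1 • eVec t) m) = y 1
    have hsc : s ∉ Sᶜ := by simp [hs]
    simp only [Pi.add_apply, Pi.smul_apply, smul_eq_mul, Finset.sum_add_distrib,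
      ← Finset.mul_sum, sum_eVec_mem, if_pos ht, if_neg hsc]
    ring

lemma finrank_ker_phi2 {S : Finset (Fin (n+1))} (hS : S.Nonempty) (hT : Sᶜ.Nonempty) :
    Module.finrank ℝ (LinearMap.ker (phi2 S)) = n - 1 := by
  rw [finrank_ker_of_surj (phi2 S) (phi2_surj hS hT)]
  omega

lemma spanDiff_mono {k : ℕ} {F G : Set (Fin k → ℝ)} (h : F ⊆ G) :
    spanDiff F ≤ spanDiff G := by
  rw [spanDiff, spanDiff]
  apply Submodule.span_mono
  rintro z ⟨u, hu, v, hv, rfl⟩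
  exact ⟨u, h hu, v, h hv, rfl⟩

/-- The sum-of-coordinates map. -/
noncomputable def phiSum (k : ℕ) : (Fin k → ℝ) →ₗ[ℝ] (Fin 1 → ℝ) :=
  LinearMap.pi ![dotL (fun _ => 1)]

lemma mem_ker_phiSum {k : ℕ} (x : Fin k → ℝ) :
    x ∈ LinearMap.ker (phiSum k) ↔ ∑ m, x m = 0 := by
  rw [LinearMap.mem_ker]
  constructor
  · intro h
    have := congrFun h 0
    simpa [phiSum, LinearMap.pi_apply, dot] using this
  · intro h
    funext j
    fin_cases j
    simpa [phiSum, LinearMap.pi_apply, dot] using h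

lemma spanDiff_P_eq (ha : ∀ p : Fin (n+1) × Fin (n+1), p.1 ≤ p.2 → 0 < a p) :
    spanDiff (AssIII n a) = LinearMap.ker (phiSum (n+1)) := by
  refine le_antisymm ?_ ?_
  · rw [spanDiff, Submodule.span_le]
    rintro z ⟨u, hu, v, hv, rfl⟩
    rw [SetLike.mem_coe, mem_ker_phiSum]
    simp only [Pi.sub_apply, Finset.sum_sub_distrib,
      sum_coords_of_mem hu, sum_coords_of_mem hv, sub_self]
  · intro x hx
    rw [mem_ker_phiSum] at hx
    have hspan := mem_span_diffs Finset.univ x (fun m _ => Finset.mem_univ m) hx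
    have hItv : IsItv (Finset.univ (α := Fin (n+1)))ᶜ := by
      intro x' y' z' hx' _ _ _
      simp at hx'
    have hsub : spanDiff (maxFace (AssIII n a) (ind Finset.univ)) ≤ spanDiff (AssIII n a) :=
      spanDiff_mono (fun y hy => hy.1)
    refine hsub ?_
    rw [spanDiff_maxFace_ind_eq ha Finset.univ_nonempty hItv]
    refine (Submodule.span_le.2 ?_) hspan
    rintro z ⟨u, hu, v, hv, rfl⟩
    rw [SetLike.mem_coe, mem_ker_phi2]
    constructor
    · simp only [Pi.sub_apply, Finset.sum_sub_distrib, sum_eVec_mem]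
      simp
    · simp
  
lemma phiSum_surj (k : ℕ) (hk : 1 ≤ k) : Function.Surjective (phiSum k) := by
  intro y
  refine ⟨y 0 • eVec ⟨0, hk⟩, ?_⟩
  funext j
  fin_cases j
  show (∑ m, (1:ℝ) * (y 0 • eVec ⟨0, hk⟩) m) = y 0
  simp only [Pi.smul_apply, smul_eq_mul, one_mul, ← Finset.mul_sum, sum_eVec]
  ring

lemma dimOf_P (ha : ∀ p : Fin (n+1) × Fin (n+1), p.1 ≤ p.2 → 0 < a p) :
    dimOf (AssIII n a) = n := by
  rw [dimOf, spanDiff_P_eq ha, finrank_ker_of_surj _ (phiSum_surj (n+1) (by omega))]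
  omega

lemma maxFace_affine (ha : ∀ p : Fin (n+1) × Fin (n+1), p.1 ≤ p.2 → 0 < a p)
    {w w' : Fin (n+1) → ℝ} {α β : ℝ} (hα : 0 < α)
    (hw' : ∀ m, w' m = α * w m + β) :
    maxFace (AssIII n a) w' = maxFace (AssIII n a) w := by
  have key : ∀ z ∈ AssIII n a,
      dot w' z = α * dot w z + β * (∑ p ∈ pairIdx n, a p) := by
    intro z hz
    show (∑ m, w' m * z m) = _
    rw [← sum_coords_of_mem hz]
    have : ∀ m, w' m * z m = α * (w m * z m) + β * z m := by
      intro m; rw [hw' m]; ring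
    rw [Finset.sum_congr rfl (fun m _ => this m), Finset.sum_add_distrib,
      ← Finset.mul_sum, ← Finset.mul_sum]
    rfl
  ext x
  constructor
  · rintro ⟨hxP, hmax⟩
    refine ⟨hxP, fun y hy => ?_⟩
    have := hmax y hy
    rw [key x hxP, key y hy] at this
    nlinarith
  · rintro ⟨hxP, hmax⟩
    refine ⟨hxP, fun y hy => ?_⟩
    have := hmax y hy
    rw [key x hxP, key y hy]
    nlinarith

/-- Packaged facet statement for indicator faces. -/
lemma facet_of_ind (hn : 1 ≤ n) (ha : ∀ p : Fin (n+1) × Fin (n+1), p.1 ≤ p.2 → 0 < a p)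
    {S : Finset (Fin (n+1))} (hS : S.Nonempty) (hT : Sᶜ.Nonempty) (hItv : IsItv Sᶜ) :
    IsFacetOf (AssIII n a) (maxFace (AssIII n a) (ind S)) := by
  refine ⟨⟨ind S, rfl⟩, ?_⟩
  rw [dimOf, spanDiff_maxFace_ind_eq ha hS hItv, dimOf_P ha,
    finrank_ker_of_surj _ (phi2_surj hS hT)]
  omega


/-- Initial segment of coordinates. -/
def Slt (n i : ℕ) : Finset (Fin (n+1)) := Finset.univ.filter (fun m => m.val < i)

/-- Final segment of coordinates. -/
def Sge (n i : ℕ) : Finset (Fin (n+1)) := Finset.univ.filter (fun m => i ≤ m.val)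

lemma mem_Slt {i : ℕ} {m : Fin (n+1)} : m ∈ Slt n i ↔ m.val < i := by
  simp [Slt]

lemma mem_Sge {i : ℕ} {m : Fin (n+1)} : m ∈ Sge n i ↔ i ≤ m.val := by
  simp [Sge]

lemma compl_Slt (i : ℕ) : (Slt n i)ᶜ = Sge n i := by
  ext m; simp only [Finset.mem_compl, mem_Slt, mem_Sge]; omega

lemma compl_Sge (i : ℕ) : (Sge n i)ᶜ = Slt n i := by
  ext m; simp only [Finset.mem_compl, mem_Sge, mem_Slt]; omega

lemma Slt_nonempty {i : ℕ} (h : 1 ≤ i) : (Slt n i).Nonempty :=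
  ⟨⟨0, by omega⟩, mem_Slt.2 (show 0 < i by omega)⟩

lemma Sge_nonempty {i : ℕ} (h : i ≤ n) : (Sge n i).Nonempty :=
  ⟨⟨n, by omega⟩, mem_Sge.2 (show i ≤ n from h)⟩

lemma isItv_Slt (i : ℕ) : IsItv (Slt n i) := by
  intro x y z _ hz hxy hyz
  rw [mem_Slt] at *
  have := (Fin.le_def).1 hyz
  omega

lemma isItv_Sge (i : ℕ) : IsItv (Sge n i) := by
  intro x y z hx _ hxy _
  rw [mem_Sge] at *
  have := (Fin.le_def).1 hxy
  omega

lemma wFun_eq_ind (i : ℕ) : wFun n i = ind (Slt n i) := by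
  funext m
  simp [wFun, ind, mem_Slt]

lemma maxFace_neg_wFun (ha : ∀ p : Fin (n+1) × Fin (n+1), p.1 ≤ p.2 → 0 < a p)
    (i : ℕ) :
    maxFace (AssIII n a) (-wFun n i) = maxFace (AssIII n a) (ind (Sge n i)) := by
  refine maxFace_affine ha (β := -1) one_pos (fun m => ?_)
  by_cases h : m.val < i
  · have h' : ¬ i ≤ m.val := by omega
    simp [wFun, ind, mem_Sge, h, h']
  · have h' : i ≤ m.val := by omega
    simp [wFun, ind, mem_Sge, h, h']

lemma ker_phi2_compl {k : ℕ} (S : Finset (Fin k)) :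
    LinearMap.ker (phi2 S) = LinearMap.ker (phi2 Sᶜ) := by
  ext x
  rw [mem_ker_phi2, mem_ker_phi2, compl_compl, and_comm]

lemma dot_neg {k : ℕ} (w x : Fin k → ℝ) : dot (-w) x = - dot w x := by
  show (∑ m, (-w) m * x m) = -∑ m, w m * x m
  rw [← Finset.sum_neg_distrib]
  exact Finset.sum_congr rfl (fun m _ => by simp)

lemma mQ_add_mQ_neg_nonneg {w : Fin (n+1) → ℝ} {p : Fin (n+1) × Fin (n+1)}
    (hp : p.1 ≤ p.2) : 0 ≤ mQ w p + mQ (-w) p := by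
  obtain ⟨m, h1, h2, h3⟩ := exists_mQ (w := w) hp
  have := le_mQ (w := -w) hp h1 h2
  rw [Pi.neg_apply] at this
  linarith

lemma maxVal_add_pos (ha : ∀ p : Fin (n+1) × Fin (n+1), p.1 ≤ p.2 → 0 < a p)
    {i : ℕ} (h1 : 1 ≤ i) (h2 : i ≤ n) :
    0 < maxVal a (wFun n i) + maxVal a (-wFun n i) := by
  rw [maxVal, maxVal, ← Finset.sum_add_distrib]
  have heq : ∀ p ∈ pairIdx n, a p * mQ (wFun n i) p + a p * mQ (-wFun n i) p
      = a p * (mQ (wFun n i) p + mQ (-wFun n i) p) := fun p _ => by ring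
  rw [Finset.sum_congr rfl heq]
  refine Finset.sum_pos' (fun p hp => ?_) ⟨(0, Fin.last n), q0_mem, ?_⟩
  · have hp' := mem_pairIdx.1 hp
    exact mul_nonneg (le_of_lt (ha p hp')) (mQ_add_mQ_neg_nonneg hp')
  · have hq1 : mQ (wFun n i) ((0, Fin.last n) : Fin (n+1) × Fin (n+1)) = 1 := by
      rw [wFun_eq_ind, mQ_ind (Fin.le_last _), if_pos]
      exact ⟨⟨0, by omega⟩, Fin.zero_le _, Fin.le_last _, mem_Slt.2 (by simp; omega)⟩
    have hq2 : (0:ℝ) ≤ mQ (-wFun n i) ((0, Fin.last n) : Fin (n+1) × Fin (n+1)) := by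
      have := le_mQ (w := -wFun n i) (p := ((0, Fin.last n) : Fin (n+1) × Fin (n+1)))
        (Fin.le_last _) (Fin.zero_le (Fin.last n)) (le_refl _)
      have hlast : (-wFun n i) (Fin.last n) = 0 := by
        simp [wFun, Fin.last, show ¬ (n < i) by omega]
      rw [hlast] at this
      exact this
    have := ha _ (mem_pairIdx.1 (q0_mem (n := n)))
    nlinarith

lemma maxFace_wFun_ne (ha : ∀ p : Fin (n+1) × Fin (n+1), p.1 ≤ p.2 → 0 < a p)
    {i : ℕ} (h1 : 1 ≤ i) (h2 : i ≤ n) :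
    maxFace (AssIII n a) (wFun n i) ≠ maxFace (AssIII n a) (-wFun n i) := by
  intro heq
  obtain ⟨f, hf⟩ := exists_faceRep (n := n) (wFun n i)
  have hx1 := faceRep_sum_mem ha hf
  have hx2 : (∑ p ∈ pairIdx n, a p • f p) ∈ maxFace (AssIII n a) (-wFun n i) :=
    heq ▸ hx1
  have d1 := ((mem_maxFace_iff ha).1 hx1).2
  have d2 := ((mem_maxFace_iff ha).1 hx2).2
  rw [dot_neg] at d2
  have := maxVal_add_pos ha h1 h2 (a := a)
  linarith

/-- First part of the theorem, packaged. -/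
lemma part1 (hn : 1 ≤ n) (ha : ∀ p : Fin (n+1) × Fin (n+1), p.1 ≤ p.2 → 0 < a p)
    {i : ℕ} (h1 : 1 ≤ i) (h2 : i ≤ n) :
    IsFacetOf (AssIII n a) (maxFace (AssIII n a) (wFun n i)) ∧
    IsFacetOf (AssIII n a) (maxFace (AssIII n a) (-wFun n i)) ∧
    maxFace (AssIII n a) (wFun n i) ≠ maxFace (AssIII n a) (-wFun n i) ∧
    ParallelFaces (maxFace (AssIII n a) (wFun n i))
      (maxFace (AssIII n a) (-wFun n i)) := by
  refine ⟨?_, ?_, maxFace_wFun_ne ha h1 h2, ?_⟩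
  · rw [wFun_eq_ind]
    exact facet_of_ind hn ha (Slt_nonempty h1) (by rw [compl_Slt]; exact Sge_nonempty h2)
      (by rw [compl_Slt]; exact isItv_Sge i)
  · rw [maxFace_neg_wFun ha]
    exact facet_of_ind hn ha (Sge_nonempty h2) (by rw [compl_Sge]; exact Slt_nonempty h1)
      (by rw [compl_Sge]; exact isItv_Slt i)
  · show spanDiff _ = spanDiff _
    rw [maxFace_neg_wFun ha, wFun_eq_ind,
      spanDiff_maxFace_ind_eq ha (Slt_nonempty h1) (by rw [compl_Slt]; exact isItv_Sge i),
      spanDiff_maxFace_ind_eq ha (Sge_nonempty h2) (by rw [compl_Sge]; exact isItv_Slt i),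
      ker_phi2_compl (Slt n i), compl_Slt]

lemma spanDiff_maxFace_wFun (ha : ∀ p : Fin (n+1) × Fin (n+1), p.1 ≤ p.2 → 0 < a p)
    {i : ℕ} (h1 : 1 ≤ i) (h2 : i ≤ n) :
    spanDiff (maxFace (AssIII n a) (wFun n i)) = LinearMap.ker (phi2 (Slt n i)) := by
  rw [wFun_eq_ind]
  exact spanDiff_maxFace_ind_eq ha (Slt_nonempty h1) (by rw [compl_Slt]; exact isItv_Sge i)

lemma ker_phi2_Slt_injective {i j : ℕ} (h1 : 1 ≤ i) (h2 : i ≤ n) (h3 : 1 ≤ j)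
    (h4 : j ≤ n) (hij : i < j)
    (heq : LinearMap.ker (phi2 (Slt n i)) = LinearMap.ker (phi2 (Slt n j))) : False := by
  set z : Fin (n+1) → ℝ := eVec ⟨i, by omega⟩ - eVec ⟨j, by omega⟩ with hz
  have hmem : z ∈ LinearMap.ker (phi2 (Slt n i)) := by
    rw [mem_ker_phi2]
    constructor
    · simp only [hz, Pi.sub_apply, Finset.sum_sub_distrib, sum_eVec_mem]
      rw [if_neg (fun hc => absurd (show i < i from mem_Slt.1 hc) (by omega)),
        if_neg (fun hc => absurd (show j < i from mem_Slt.1 hc) (by omega))]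
      ring
    · simp only [hz, Pi.sub_apply, Finset.sum_sub_distrib, sum_eVec_mem, compl_Slt]
      rw [if_pos (mem_Sge.2 (show i ≤ i from le_refl i)),
        if_pos (mem_Sge.2 (show i ≤ j from le_of_lt hij))]
      ring
  rw [heq, mem_ker_phi2] at hmem
  have := hmem.1
  simp only [hz, Pi.sub_apply, Finset.sum_sub_distrib, sum_eVec_mem] at this
  rw [if_pos (mem_Slt.2 (show i < j from hij)),
    if_neg (fun hc => absurd (show j < j from mem_Slt.1 hc) (by omega))] at this
  norm_num at this


/-- Map by three linear functionals. -/
noncomputable def phi3 {k : ℕ} (v1 v2 v3 : Fin k → ℝ) :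
    (Fin k → ℝ) →ₗ[ℝ] (Fin 3 → ℝ) :=
  LinearMap.pi ![dotL v1, dotL v2, dotL v3]

lemma mem_ker_phi3 {k : ℕ} (v1 v2 v3 x : Fin k → ℝ) :
    x ∈ LinearMap.ker (phi3 v1 v2 v3) ↔ dot v1 x = 0 ∧ dot v2 x = 0 ∧ dot v3 x = 0 := by
  rw [LinearMap.mem_ker]
  constructor
  · intro h
    exact ⟨by simpa [phi3] using congrFun h 0, by simpa [phi3] using congrFun h 1,
      by simpa [phi3] using congrFun h 2⟩
  · rintro ⟨h1, h2, h3⟩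
    funext j
    fin_cases j
    · simpa [phi3] using h1
    · simpa [phi3] using h2
    · simpa [phi3] using h3

lemma dot_three {k : ℕ} (v : Fin k → ℝ) (c1 c2 c3 : ℝ) (m1 m2 m3 : Fin k) :
    dot v (c1 • eVec m1 + c2 • eVec m2 + c3 • eVec m3)
      = c1 * v m1 + c2 * v m2 + c3 * v m3 := by
  rw [← dotL_apply, map_add, map_add, map_smul, map_smul, map_smul]
  simp [dot_eVec]

lemma phi3_surj_of_solve {k : ℕ} {v1 v2 v3 : Fin k → ℝ}
    (h : ∀ y : Fin 3 → ℝ, ∃ x, dot v1 x = y 0 ∧ dot v2 x = y 1 ∧ dot v3 x = y 2) :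
    Function.Surjective (phi3 v1 v2 v3) := by
  intro y
  obtain ⟨x, h1, h2, h3⟩ := h y
  refine ⟨x, ?_⟩
  funext j
  fin_cases j
  · simpa [phi3] using h1
  · simpa [phi3] using h2
  · simpa [phi3] using h3

lemma two_le_of_three_distinct {k : ℕ} {t1 t2 s : Fin (k+1)}
    (h12 : t1 ≠ t2) (h1s : t1 ≠ s) (h2s : t2 ≠ s) : 2 ≤ k := by
  have hcard : ({t1, t2, s} : Finset (Fin (k+1))).card = 3 :=
    Finset.card_eq_three.2 ⟨t1, t2, s, h12, h1s, h2s, rfl⟩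
  have := Finset.card_le_univ ({t1, t2, s} : Finset (Fin (k+1)))
  rw [hcard] at this
  simp only [Finset.card_univ, Fintype.card_fin] at this
  omega

/-- On a facet, the maximizing functional takes only two values. -/
lemma facet_two_valued
    (ha : ∀ p : Fin (n+1) × Fin (n+1), p.1 ≤ p.2 → 0 < a p) {w : Fin (n+1) → ℝ}
    (hfacet : IsFacetOf (AssIII n a) (maxFace (AssIII n a) w))
    {W : ℝ} (hW : ∀ m, w m ≤ W)
    {S : Finset (Fin (n+1))} (hSdef : ∀ m, m ∈ S ↔ w m = W) (hS : S.Nonempty)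
    {t1 t2 : Fin (n+1)} (ht1 : t1 ∉ S) (ht2 : t2 ∉ S) : w t1 = w t2 := by
  by_contra hne
  obtain ⟨s, hs⟩ := hS
  have hws : w s = W := (hSdef s).1 hs
  have h1s : t1 ≠ s := fun h => ht1 (h ▸ hs)
  have h2s : t2 ≠ s := fun h => ht2 (h ▸ hs)
  have h12 : t1 ≠ t2 := fun h => hne (by rw [h])
  have hn2 : 2 ≤ n := two_le_of_three_distinct h12 h1s h2s
  -- the span of the facet lies in the kernel of three independent functionals
  have hle : spanDiff (maxFace (AssIII n a) w)
      ≤ LinearMap.ker (phi3 (fun _ => 1) w (ind S)) := by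
    rw [spanDiff, Submodule.span_le]
    rintro z ⟨u, hu, v, hv, rfl⟩
    rw [SetLike.mem_coe, mem_ker_phi3]
    have e1 : ∀ y : Fin (n+1) → ℝ, dot (fun _ => (1:ℝ)) y = ∑ m, y m := by
      intro y; simp [dot]
    have hd1 : dot (fun _ => (1:ℝ)) (u - v) = 0 := by
      rw [← dotL_apply, map_sub]
      simp only [dotL_apply, e1]
      rw [sum_coords_of_mem hu.1, sum_coords_of_mem hv.1, sub_self]
    have hd2 : dot w (u - v) = 0 := by
      rw [← dotL_apply, map_sub]
      have := le_antisymm (hu.2 v hv.1) (hv.2 u hu.1)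
      simp only [dotL_apply]
      rw [this, sub_self]
    have hd3 : dot (ind S) (u - v) = 0 := by
      rw [← dotL_apply, map_sub]
      simp only [dotL_apply]
      rw [dot_argmax_const ha hW hSdef u hu, dot_argmax_const ha hW hSdef v hv, sub_self]
    exact ⟨hd1, hd2, hd3⟩
  -- the three functionals are independent, so that kernel has rank `n - 2`
  have hsurj : Function.Surjective (phi3 (fun _ => (1:ℝ)) w (ind S)) := by
    refine phi3_surj_of_solve (fun y => ?_)
    have hd : w t1 - w t2 ≠ 0 := sub_ne_zero.2 hne
    set c3 := y 2 with hc3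
    set c1 := (y 1 - y 2 * W - (y 0 - y 2) * w t2) / (w t1 - w t2) with hc1
    set c2 := (y 0 - y 2) - c1 with hc2
    refine ⟨c1 • eVec t1 + c2 • eVec t2 + c3 • eVec s, ?_, ?_, ?_⟩
    · rw [dot_three]
      simp only [hc2, hc3]
      ring
    · rw [dot_three, hws]
      rw [hc2, hc1]
      field_simp
      ring
    · rw [dot_three]
      have e1 : ind S t1 = 0 := by rw [ind, if_neg ht1]
      have e2 : ind S t2 = 0 := by rw [ind, if_neg ht2]
      have e3 : ind S s = 1 := by rw [ind, if_pos hs]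
      rw [e1, e2, e3, hc3]
      ring
  have hrank : Module.finrank ℝ (LinearMap.ker (phi3 (fun _ => (1:ℝ)) w (ind S)))
      = n + 1 - 3 := finrank_ker_of_surj _ hsurj
  have hdim : dimOf (maxFace (AssIII n a) w) + 1 = n := by
    have := hfacet.2
    rwa [dimOf_P (a := a) ha] at this
  have hmono := Submodule.finrank_mono hle
  rw [hrank] at hmono
  rw [dimOf] at hdim
  omega


lemma dot_const_on_face (ha : ∀ p : Fin (n+1) × Fin (n+1), p.1 ≤ p.2 → 0 < a p)
    {w ψ : Fin (n+1) → ℝ} {r : Fin (n+1) × Fin (n+1) → ℝ}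
    (hr : ∀ p ∈ pairIdx n, ∀ y : Fin (n+1) → ℝ, IsSimp p y →
      (∀ m, y m ≠ 0 → w m = mQ w p) → dot ψ y = r p) :
    ∀ x ∈ maxFace (AssIII n a) w, dot ψ x = ∑ p ∈ pairIdx n, a p * r p := by
  intro x hx
  obtain ⟨f, hf, rfl⟩ := (mem_maxFace_iff_rep ha).1 hx
  rw [dot_sum_rep]
  exact Finset.sum_congr rfl
    (fun p hp => by rw [hr p hp (f p) (hf p hp).1 (hf p hp).2])

lemma facet_rank_contradiction (ha : ∀ p : Fin (n+1) × Fin (n+1), p.1 ≤ p.2 → 0 < a p)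
    {F : Set (Fin (n+1) → ℝ)} (hfacet : IsFacetOf (AssIII n a) F)
    {v1 v2 v3 : Fin (n+1) → ℝ} (hle : spanDiff F ≤ LinearMap.ker (phi3 v1 v2 v3))
    (hsurj : Function.Surjective (phi3 v1 v2 v3)) (hn2 : 2 ≤ n) : False := by
  have hrank := finrank_ker_of_surj _ hsurj
  have hdim : dimOf F + 1 = n := by
    have := hfacet.2
    rwa [dimOf_P (a := a) ha] at this
  have hmono := Submodule.finrank_mono hle
  rw [hrank] at hmono
  rw [dimOf] at hdim
  omega

/-- If the `ind S` face is a facet, then `Sᶜ` is an interval. -/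
lemma isItv_compl_of_facet (ha : ∀ p : Fin (n+1) × Fin (n+1), p.1 ≤ p.2 → 0 < a p)
    {S : Finset (Fin (n+1))}
    (hfacet : IsFacetOf (AssIII n a) (maxFace (AssIII n a) (ind S))) : IsItv Sᶜ := by
  intro t1 s t2 ht1 ht2 h1 h2
  by_contra hsS'
  have hsS : s ∈ S := by rwa [Finset.mem_compl, not_not] at hsS'
  have ht1S : t1 ∉ S := Finset.mem_compl.1 ht1
  have ht2S : t2 ∉ S := Finset.mem_compl.1 ht2
  have h1lt : t1 < s := lt_of_le_of_ne h1 (fun h => ht1S (h ▸ hsS))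
  have h2lt : s < t2 := lt_of_le_of_ne h2 (fun h => ht2S (h.symm ▸ hsS))
  have h12 : t1 ≠ t2 := ne_of_lt (lt_trans h1lt h2lt)
  have h1s : t1 ≠ s := ne_of_lt h1lt
  have h2s : t2 ≠ s := (ne_of_lt h2lt).symm
  have hn2 : 2 ≤ n := two_le_of_three_distinct h12 h1s h2s
  classical
  set T1 : Finset (Fin (n+1)) := Sᶜ.filter (fun m => m < s) with hT1
  have ht1T1 : t1 ∈ T1 := Finset.mem_filter.2 ⟨ht1, h1lt⟩
  have ht2T1 : t2 ∉ T1 := fun hc =>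
    absurd ((Finset.mem_filter.1 hc).2) (not_lt.2 (le_of_lt h2lt))
  have hsT1 : s ∉ T1 := fun hc => hsS' (Finset.mem_filter.1 hc).1
  set r : Fin (n+1) × Fin (n+1) → ℝ := fun p =>
    if (¬ ∃ m, p.1 ≤ m ∧ m ≤ p.2 ∧ m ∈ S) ∧ p.2 < s then 1 else 0 with hrdef
  have hr : ∀ p ∈ pairIdx n, ∀ y : Fin (n+1) → ℝ, IsSimp p y →
      (∀ m, y m ≠ 0 → ind S m = mQ (ind S) p) → dot (ind T1) y = r p := by
    intro p hp y hy hsupp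
    have hp' := mem_pairIdx.1 hp
    rw [dot_ind]
    by_cases hmeets : ∃ m, p.1 ≤ m ∧ m ≤ p.2 ∧ m ∈ S
    · have hmq : mQ (ind S) p = 1 := by rw [mQ_ind hp', if_pos hmeets]
      have hz : ∀ m ∈ T1, y m = 0 := by
        intro m hm
        have hmS : m ∉ S := Finset.mem_compl.1 (Finset.mem_filter.1 hm).1
        by_contra hy0
        have := hsupp m hy0
        rw [hmq] at this
        exact hmS ((ind_eq_one_iff S m).2 this)
      rw [Finset.sum_eq_zero hz, hrdef]
      simp [hmeets]
    · have hmq0 : mQ (ind S) p = 0 := by rw [mQ_ind hp', if_neg hmeets]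
      push_neg at hmeets
      by_cases hps : p.2 < s
      · have hsum : ∑ m ∈ T1, y m = 1 := by
          rw [Finset.sum_subset (Finset.subset_univ T1) ?_]
          · exact hy.2.2
          · intro m _ hmT1
            by_contra hy0
            have hbd := hy.2.1 m hy0
            have hmS : m ∉ S := hmeets m hbd.1 hbd.2
            exact hmT1 (Finset.mem_filter.2 ⟨Finset.mem_compl.2 hmS,
              lt_of_le_of_lt hbd.2 hps⟩)
        rw [hsum, hrdef]
        have : (¬ ∃ m, p.1 ≤ m ∧ m ≤ p.2 ∧ m ∈ S) ∧ p.2 < s := by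
          push_neg
          exact ⟨hmeets, hps⟩
        simp [this.1, this.2]
      · have hsp1 : s < p.1 := by
          by_contra hcon
          push_neg at hcon
          exact (hmeets s hcon (not_lt.1 hps)) hsS
        have hz : ∀ m ∈ T1, y m = 0 := by
          intro m hm
          by_contra hy0
          have hbd := hy.2.1 m hy0
          have : m < s := (Finset.mem_filter.1 hm).2
          exact absurd (lt_of_lt_of_le hsp1 hbd.1) (not_lt.2 (le_of_lt this))
        rw [Finset.sum_eq_zero hz, hrdef]
        simp [hps]
  have hle : spanDiff (maxFace (AssIII n a) (ind S))
      ≤ LinearMap.ker (phi3 (fun _ => 1) (ind S) (ind T1)) := by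
    rw [spanDiff, Submodule.span_le]
    rintro z ⟨u, hu, v, hv, rfl⟩
    rw [SetLike.mem_coe, mem_ker_phi3]
    have e1 : ∀ y : Fin (n+1) → ℝ, dot (fun _ => (1:ℝ)) y = ∑ m, y m := by
      intro y; simp [dot]
    refine ⟨?_, ?_, ?_⟩
    · rw [← dotL_apply, map_sub]
      simp only [dotL_apply, e1]
      rw [sum_coords_of_mem hu.1, sum_coords_of_mem hv.1, sub_self]
    · rw [← dotL_apply, map_sub]
      simp only [dotL_apply]
      rw [dot_argmax_const ha (ind_le_one S) (ind_eq_one_iff S) u hu,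
        dot_argmax_const ha (ind_le_one S) (ind_eq_one_iff S) v hv, sub_self]
    · rw [← dotL_apply, map_sub]
      simp only [dotL_apply]
      rw [dot_const_on_face ha hr u hu, dot_const_on_face ha hr v hv, sub_self]
  have hsurj : Function.Surjective (phi3 (fun _ => (1:ℝ)) (ind S) (ind T1)) := by
    refine phi3_surj_of_solve (fun y => ?_)
    refine ⟨y 2 • eVec t1 + (y 0 - y 1 - y 2) • eVec t2 + y 1 • eVec s, ?_, ?_, ?_⟩
    · rw [dot_three]; ring
    · rw [dot_three]
      rw [show ind S t1 = 0 from if_neg ht1S, show ind S t2 = 0 from if_neg ht2S,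
        show ind S s = 1 from if_pos hsS]
      ring
    · rw [dot_three]
      rw [show ind T1 t1 = 1 from if_pos ht1T1, show ind T1 t2 = 0 from if_neg ht2T1,
        show ind T1 s = 0 from if_neg hsT1]
      ring
  exact facet_rank_contradiction ha hfacet hle hsurj hn2


/-- Structure of an arbitrary facet: it is the maximal face of an indicator
functional whose complement set is a nonempty interval. -/
lemma facet_structure (ha : ∀ p : Fin (n+1) × Fin (n+1), p.1 ≤ p.2 → 0 < a p)
    {F : Set (Fin (n+1) → ℝ)} (hfacet : IsFacetOf (AssIII n a) F) :
    ∃ S : Finset (Fin (n+1)), S.Nonempty ∧ Sᶜ.Nonempty ∧ IsItv Sᶜ ∧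
      F = maxFace (AssIII n a) (ind S) := by
  obtain ⟨⟨w, rfl⟩, hdim⟩ := hfacet
  have hfacet : IsFacetOf (AssIII n a) (maxFace (AssIII n a) w) := ⟨⟨w, rfl⟩, hdim⟩
  classical
  set W : ℝ := mQ w ((0, Fin.last n) : Fin (n+1) × Fin (n+1)) with hWdef
  have hq0' : (0 : Fin (n+1)) ≤ Fin.last n := Fin.zero_le _
  have hW : ∀ m, w m ≤ W := fun m => le_mQ hq0' (Fin.zero_le m) (Fin.le_last m)
  set S : Finset (Fin (n+1)) := Finset.univ.filter (fun m => w m = W) with hSdef'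
  have hSdef : ∀ m, m ∈ S ↔ w m = W := fun m => by simp [hSdef']
  have hS : S.Nonempty := by
    obtain ⟨m, _, _, hm⟩ := exists_mQ (w := w)
      (p := ((0, Fin.last n) : Fin (n+1) × Fin (n+1))) hq0'
    exact ⟨m, (hSdef m).2 hm⟩
  have hT : Sᶜ.Nonempty := by
    by_contra hc
    rw [Finset.not_nonempty_iff_eq_empty, ← Finset.compl_univ, compl_inj_iff] at hc
    -- `w` is constant, so the face is everything, contradicting the dimension
    have hconst : ∀ m, w m = W := fun m => (hSdef m).1 (hc ▸ Finset.mem_univ m)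
    have hfaceP : maxFace (AssIII n a) w = AssIII n a := by
      apply Set.eq_of_subset_of_subset (fun x hx => hx.1)
      intro x hx
      refine ⟨hx, fun y hy => ?_⟩
      have hval : ∀ z ∈ AssIII n a, dot w z = W * (∑ p ∈ pairIdx n, a p) := by
        intro z hz
        show (∑ m, w m * z m) = _
        rw [Finset.sum_congr rfl (fun m _ => by rw [hconst m]), ← Finset.mul_sum,
          sum_coords_of_mem hz]
      rw [hval x hx, hval y hy]
    rw [hfaceP] at hdim
    exact Nat.succ_ne_self _ hdim
  obtain ⟨t0, ht0⟩ := hT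
  have ht0S : t0 ∉ S := Finset.mem_compl.1 ht0
  set v : ℝ := w t0 with hvdef
  have hvW : v < W := lt_of_le_of_ne (hW t0) (fun h => ht0S ((hSdef t0).2 h))
  have htwo : ∀ m, m ∉ S → w m = v :=
    fun m hm => facet_two_valued ha hfacet hW hSdef hS hm ht0S
  have haff : ∀ m, w m = (W - v) * ind S m + v := by
    intro m
    by_cases hm : m ∈ S
    · rw [show ind S m = 1 from if_pos hm, (hSdef m).1 hm]; ring
    · rw [show ind S m = 0 from if_neg hm, htwo m hm]; ring
  have heq : maxFace (AssIII n a) w = maxFace (AssIII n a) (ind S) :=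
    maxFace_affine ha (sub_pos.2 hvW) haff
  refine ⟨S, hS, ⟨t0, ht0⟩, ?_, heq⟩
  exact isItv_compl_of_facet ha (heq ▸ hfacet)

lemma diff_mem_ker_phi2_iff {k : ℕ} (S : Finset (Fin k)) (b c : Fin k) :
    eVec b - eVec c ∈ LinearMap.ker (phi2 S) ↔ ((b ∈ S) ↔ (c ∈ S)) := by
  rw [mem_ker_phi2]
  have e1 : ∀ A : Finset (Fin k), ∑ m ∈ A, (eVec b - eVec c) m
      = (if b ∈ A then (1:ℝ) else 0) - (if c ∈ A then (1:ℝ) else 0) := by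
    intro A
    simp only [Pi.sub_apply, Finset.sum_sub_distrib, sum_eVec_mem]
  rw [e1, e1]
  by_cases hb : b ∈ S <;> by_cases hc : c ∈ S <;>
    simp [hb, hc, Finset.mem_compl] <;> norm_num

lemma partition_eq {S S' : Finset (Fin (n+1))} (hS : S.Nonempty) (hT : Sᶜ.Nonempty)
    (hker : LinearMap.ker (phi2 S) = LinearMap.ker (phi2 S')) :
    S' = S ∨ S' = Sᶜ := by
  obtain ⟨s0, hs0⟩ := hS
  obtain ⟨t0, ht0⟩ := hT
  have ht0S : t0 ∉ S := Finset.mem_compl.1 ht0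
  by_cases hs0' : s0 ∈ S'
  · left
    ext m
    constructor
    · intro hm
      have h1 : eVec m - eVec s0 ∈ LinearMap.ker (phi2 S') :=
        (diff_mem_ker_phi2_iff S' m s0).2 (iff_of_true hm hs0')
      rw [← hker] at h1
      exact ((diff_mem_ker_phi2_iff S m s0).1 h1).2 hs0
    · intro hm
      have h1 : eVec m - eVec s0 ∈ LinearMap.ker (phi2 S) :=
        (diff_mem_ker_phi2_iff S m s0).2 (iff_of_true hm hs0)
      rw [hker] at h1
      exact ((diff_mem_ker_phi2_iff S' m s0).1 h1).2 hs0'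
  · right
    ext m
    rw [Finset.mem_compl]
    constructor
    · intro hm hmS
      have h1 : eVec m - eVec s0 ∈ LinearMap.ker (phi2 S) :=
        (diff_mem_ker_phi2_iff S m s0).2 (iff_of_true hmS hs0)
      rw [hker] at h1
      exact hs0' (((diff_mem_ker_phi2_iff S' m s0).1 h1).1 hm)
    · intro hm
      by_contra hmS'
      have h1 : eVec m - eVec s0 ∈ LinearMap.ker (phi2 S') :=
        (diff_mem_ker_phi2_iff S' m s0).2 (iff_of_false hmS' hs0')
      rw [← hker] at h1
      exact hm (((diff_mem_ker_phi2_iff S m s0).1 h1).2 hs0)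

lemma complementary_intervals {S : Finset (Fin (n+1))} (hS : S.Nonempty)
    (hT : Sᶜ.Nonempty) (hiS : IsItv S) (hiT : IsItv Sᶜ) :
    ∃ i : ℕ, 1 ≤ i ∧ i ≤ n ∧ (S = Slt n i ∨ S = Sge n i) := by
  by_cases h0 : (0 : Fin (n+1)) ∈ S
  · set t : Fin (n+1) := Sᶜ.min' hT with htdef
    have htc : t ∈ Sᶜ := Finset.min'_mem _ hT
    refine ⟨t.val, ?_, by omega, Or.inl ?_⟩
    · rcases Nat.eq_zero_or_pos t.val with h | h
      · exfalso
        have : t = 0 := Fin.ext (by simpa using h)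
        exact (Finset.mem_compl.1 htc) (this ▸ h0)
      · omega
    · ext m
      rw [mem_Slt]
      constructor
      · intro hm
        by_contra hge
        push_neg at hge
        have : t ∈ S := hiS 0 t m h0 hm (Fin.zero_le t) (by rwa [Fin.le_def])
        exact (Finset.mem_compl.1 htc) this
      · intro hm
        by_contra hmS
        have := Finset.min'_le Sᶜ m (Finset.mem_compl.2 hmS)
        rw [Fin.le_def] at this
        omega
  · have h0c : (0 : Fin (n+1)) ∈ Sᶜ := Finset.mem_compl.2 h0
    set t : Fin (n+1) := S.min' hS with htdef
    have htc : t ∈ S := Finset.min'_mem _ hS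
    refine ⟨t.val, ?_, by omega, Or.inr ?_⟩
    · rcases Nat.eq_zero_or_pos t.val with h | h
      · exfalso
        have : t = 0 := Fin.ext (by simpa using h)
        exact h0 (this ▸ htc)
      · omega
    · ext m
      rw [mem_Sge]
      constructor
      · intro hm
        have := Finset.min'_le S m hm
        rwa [Fin.le_def] at this
      · intro hm
        by_contra hmS
        have : t ∈ Sᶜ := hiT 0 t m h0c (Finset.mem_compl.2 hmS)
          (Fin.zero_le t) (by rwa [Fin.le_def])
        exact (Finset.mem_compl.1 this) htc


lemma spanDiff_maxFace_neg_wFun (ha : ∀ p : Fin (n+1) × Fin (n+1), p.1 ≤ p.2 → 0 < a p)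
    {i : ℕ} (h1 : 1 ≤ i) (h2 : i ≤ n) :
    spanDiff (maxFace (AssIII n a) (-wFun n i)) = LinearMap.ker (phi2 (Slt n i)) := by
  rw [maxFace_neg_wFun ha,
    spanDiff_maxFace_ind_eq ha (Sge_nonempty h2) (by rw [compl_Sge]; exact isItv_Slt i),
    ker_phi2_compl (Slt n i), compl_Slt]

/-- Second part of the theorem, packaged. -/
lemma part2 (ha : ∀ p : Fin (n+1) × Fin (n+1), p.1 ≤ p.2 → 0 < a p)
    {F F' : Set (Fin (n+1) → ℝ)}
    (hF : IsFacetOf (AssIII n a) F) (hF' : IsFacetOf (AssIII n a) F')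
    (hne : F ≠ F') (hpar : ParallelFaces F F') :
    ∃ i : ℕ, 1 ≤ i ∧ i ≤ n ∧
      ({F, F'} : Set (Set (Fin (n+1) → ℝ))) =
        {maxFace (AssIII n a) (wFun n i), maxFace (AssIII n a) (-wFun n i)} := by
  obtain ⟨S, hS, hT, hiT, hFeq⟩ := facet_structure ha hF
  obtain ⟨S', hS', hT', hiT', hFeq'⟩ := facet_structure ha hF'
  have hker : LinearMap.ker (phi2 S) = LinearMap.ker (phi2 S') := by
    have h1 := spanDiff_maxFace_ind_eq ha hS hiT
    have h2 := spanDiff_maxFace_ind_eq ha hS' hiT'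
    rw [← hFeq] at h1
    rw [← hFeq'] at h2
    rw [← h1, ← h2]
    exact hpar
  rcases partition_eq hS hT hker with hSS | hSS
  · exact absurd (by rw [hFeq, hFeq', hSS]) hne
  · have hiS : IsItv S := by
      have hc : S = S'ᶜ := by rw [hSS, compl_compl]
      rw [hc]
      exact hiT'
    obtain ⟨i, h1, h2, hcase⟩ := complementary_intervals hS hT hiS hiT
    refine ⟨i, h1, h2, ?_⟩
    rcases hcase with hSe | hSe
    · have e1 : F = maxFace (AssIII n a) (wFun n i) := by rw [hFeq, hSe, ← wFun_eq_ind]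
      have e2 : F' = maxFace (AssIII n a) (-wFun n i) := by
        rw [hFeq', hSS, hSe, compl_Slt, ← maxFace_neg_wFun ha]
      rw [e1, e2]
    · have e1 : F = maxFace (AssIII n a) (-wFun n i) := by
        rw [hFeq, hSe, ← maxFace_neg_wFun ha]
      have e2 : F' = maxFace (AssIII n a) (wFun n i) := by
        rw [hFeq', hSS, hSe, compl_Sge, ← wFun_eq_ind]
      rw [e1, e2, Set.pair_comm]

/-- Third part: the count. -/
lemma part3 (hn : 1 ≤ n) (ha : ∀ p : Fin (n+1) × Fin (n+1), p.1 ≤ p.2 → 0 < a p) :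
    {pr : Set (Set (Fin (n+1) → ℝ)) | ∃ F F', IsFacetOf (AssIII n a) F ∧
      IsFacetOf (AssIII n a) F' ∧ F ≠ F' ∧ ParallelFaces F F' ∧
      pr = {F, F'}}.ncard = n := by
  have hset : {pr : Set (Set (Fin (n+1) → ℝ)) | ∃ F F', IsFacetOf (AssIII n a) F ∧
      IsFacetOf (AssIII n a) F' ∧ F ≠ F' ∧ ParallelFaces F F' ∧ pr = {F, F'}}
      = (fun i : ℕ => ({maxFace (AssIII n a) (wFun n i),
          maxFace (AssIII n a) (-wFun n i)} : Set (Set (Fin (n+1) → ℝ))))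
        '' (Set.Icc 1 n) := by
    ext pr
    simp only [Set.mem_setOf_eq, Set.mem_image, Set.mem_Icc]
    constructor
    · rintro ⟨F, F', h1, h2, h3, h4, rfl⟩
      obtain ⟨i, hi1, hi2, heq⟩ := part2 ha h1 h2 h3 h4
      exact ⟨i, ⟨hi1, hi2⟩, heq.symm⟩
    · rintro ⟨i, ⟨hi1, hi2⟩, rfl⟩
      obtain ⟨f1, f2, f3, f4⟩ := part1 hn ha hi1 hi2
      exact ⟨_, _, f1, f2, f3, f4, rfl⟩
  rw [hset, Set.ncard_image_of_injOn ?inj]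
  · rw [← Finset.coe_Icc, Set.ncard_coe_finset, Nat.card_Icc]
    omega
  case inj =>
    intro i hi j hj hpair
    simp only [] at hpair
    rw [Set.mem_Icc] at hi hj
    by_contra hij
    have hmem : maxFace (AssIII n a) (wFun n i) ∈
        ({maxFace (AssIII n a) (wFun n j), maxFace (AssIII n a) (-wFun n j)} :
          Set (Set (Fin (n+1) → ℝ))) := by
      rw [← hpair]
      exact Set.mem_insert _ _
    have hkerij : LinearMap.ker (phi2 (Slt n i)) = LinearMap.ker (phi2 (Slt n j)) := by
      rcases Set.mem_insert_iff.1 hmem with hc | hc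
      · rw [← spanDiff_maxFace_wFun ha hi.1 hi.2, ← spanDiff_maxFace_wFun ha hj.1 hj.2, hc]
      · rw [Set.mem_singleton_iff] at hc
        rw [← spanDiff_maxFace_wFun ha hi.1 hi.2,
          ← spanDiff_maxFace_neg_wFun ha hj.1 hj.2, hc]
    rcases Nat.lt_or_ge i j with hlt | hge
    · exact ker_phi2_Slt_injective hi.1 hi.2 hj.1 hj.2 hlt hkerij
    · have hlt : j < i := by omega
      exact ker_phi2_Slt_injective hj.1 hj.2 hi.1 hi.2 hlt hkerij.symm

end AssAux
/-- `Ass_n^{III}(a)` has exactly `n` unordered pairs of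
distinct parallel facets, namely, for `i = 1, …, n`, the facet maximizing the
functional with first `i` coordinates `1` and last `n+1−i` coordinates `0`,
together with the facet maximizing its negative. -/
theorem assIII_parallel_facets (n : ℕ) (hn : 1 ≤ n)
    (a : Fin (n+1) × Fin (n+1) → ℝ)
    (ha : ∀ p : Fin (n+1) × Fin (n+1), p.1 ≤ p.2 → 0 < a p) :
    (∀ i : ℕ, 1 ≤ i → i ≤ n →
      IsFacetOf (AssIII n a) (maxFace (AssIII n a) (wFun n i)) ∧
      IsFacetOf (AssIII n a) (maxFace (AssIII n a) (-wFun n i)) ∧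
      maxFace (AssIII n a) (wFun n i) ≠ maxFace (AssIII n a) (-wFun n i) ∧
      ParallelFaces (maxFace (AssIII n a) (wFun n i))
        (maxFace (AssIII n a) (-wFun n i))) ∧
    (∀ F F', IsFacetOf (AssIII n a) F → IsFacetOf (AssIII n a) F' → F ≠ F' →
      ParallelFaces F F' →
      ∃ i : ℕ, 1 ≤ i ∧ i ≤ n ∧
        ({F, F'} : Set (Set (Fin (n+1) → ℝ))) =
          {maxFace (AssIII n a) (wFun n i), maxFace (AssIII n a) (-wFun n i)}) ∧
    {pr : Set (Set (Fin (n+1) → ℝ)) | ∃ F F', IsFacetOf (AssIII n a) F ∧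
      IsFacetOf (AssIII n a) F' ∧ F ≠ F' ∧ ParallelFaces F F' ∧
      pr = {F, F'}}.ncard = n := by
  exact ⟨fun i h1 h2 => AssAux.part1 hn ha h1 h2,
    fun F F' h1 h2 h3 h4 => AssAux.part2 ha h1 h2 h3 h4,
    AssAux.part3 hn ha⟩
end

section
/- Let n ≥ 1 and let D be the set of 2n diagonals of the labeled (n+3)-gon consisting of {i, n+2} for 1 ≤ i ≤ n and {0, i+1} for 1 ≤ i ≤ n. Then each of the two diagonals {1, n+2} and {0, n+1} is non-crossing with exactly n−1 of the other elements of D; more generally, for 1 ≤ i ≤ n the diagonal {i, n+2} is non-crossing with exactly (n−1)+(i−1) other elements of D. -/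
open Finset

/-- First family of diagonals: `{j+1, n+2}`. -/
def famA (n : ℕ) : Fin n → Finset (Fin (n+3)) := fun j =>
  {⟨j.val + 1, Nat.lt_of_lt_of_le (Nat.succ_lt_succ j.isLt) (Nat.le_add_right _ 2)⟩, ⟨n + 2, Nat.lt_succ_self _⟩}

/-- Second family of diagonals: `{0, j+2}`. -/
def famB (n : ℕ) : Fin n → Finset (Fin (n+3)) := fun j =>
  {⟨0, by omega⟩, ⟨j.val + 2, Nat.lt_of_lt_of_le (Nat.add_lt_add_right j.isLt 2) (Nat.le_succ _)⟩}

/-- The diagonal `{i, n+2}`. -/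
def dTop (n i : ℕ) (h : i ≤ n + 2) : Finset (Fin (n+3)) :=
  {⟨i, by omega⟩, ⟨n + 2, Nat.lt_succ_self _⟩}

lemma pair_eq_of_lt {m : ℕ} {a b c d : Fin m} (hab : a < b) (hcd : c < d)
    (h : ({a, b} : Finset (Fin m)) = {c, d}) : a = c ∧ b = d := by
  have ha : a = c ∨ a = d := by
    have : a ∈ ({c, d} : Finset (Fin m)) := by rw [← h]; simp
    simpa using this
  have hb : b = c ∨ b = d := by
    have : b ∈ ({c, d} : Finset (Fin m)) := by rw [← h]; simp
    simpa using this
  rcases ha with h1 | h1 <;> rcases hb with h2 | h2 <;>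
    simp only [Fin.ext_iff] at h1 h2 ⊢ <;>
    simp only [Fin.lt_def] at hab hcd <;> omega

lemma not_crosses_of_mem {m : ℕ} {d e : Finset (Fin m)} {x : Fin m}
    (hd : x ∈ d) (he : x ∈ e) : ¬ Crosses m d e := by
  rintro ⟨p, q, r, s, hpq, hqr, hrs, (⟨rfl, rfl⟩ | ⟨rfl, rfl⟩)⟩ <;>
  · simp only [Finset.mem_insert, Finset.mem_singleton] at hd he
    simp only [Fin.lt_def] at hpq hqr hrs
    rcases hd with rfl | rfl <;> rcases he with rfl | rfl <;> omega

lemma crosses_comm {m : ℕ} {d e : Finset (Fin m)} (h : Crosses m d e) :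
    Crosses m e d := by
  obtain ⟨p, q, r, s, h1, h2, h3, h4 | h4⟩ := h
  · exact ⟨p, q, r, s, h1, h2, h3, Or.inr ⟨h4.2, h4.1⟩⟩
  · exact ⟨p, q, r, s, h1, h2, h3, Or.inl ⟨h4.2, h4.1⟩⟩

lemma crosses_zero_iff (n i k : ℕ) (hi0 : 1 ≤ i) (hin : i ≤ n + 1)
    (hk : 1 ≤ k) (hkn : k ≤ n + 1) :
    Crosses (n+3) ({⟨0, by omega⟩, ⟨k, by omega⟩} : Finset (Fin (n+3)))
      ({⟨i, by omega⟩, ⟨n + 2, by omega⟩} : Finset (Fin (n+3))) ↔ i < k := by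
  constructor
  · rintro ⟨p, q, r, s, hpq, hqr, hrs, (⟨h1, h2⟩ | ⟨h1, h2⟩)⟩
    · obtain ⟨e1, e2⟩ := pair_eq_of_lt
        (show (⟨0, by omega⟩ : Fin (n+3)) < ⟨k, by omega⟩ by
          simp only [Fin.mk_lt_mk]; omega) (hpq.trans hqr) h1
      obtain ⟨e3, e4⟩ := pair_eq_of_lt
        (show (⟨i, by omega⟩ : Fin (n+3)) < ⟨n + 2, by omega⟩ by
          simp only [Fin.mk_lt_mk]; omega) (hqr.trans hrs) h2
      rw [← e3, ← e2] at hqr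
      simpa only [Fin.mk_lt_mk] using hqr
    · obtain ⟨e1, e2⟩ := pair_eq_of_lt
        (show (⟨0, by omega⟩ : Fin (n+3)) < ⟨k, by omega⟩ by
          simp only [Fin.mk_lt_mk]; omega) (hqr.trans hrs) h1
      rw [← e1] at hpq
      simp only [Fin.lt_def] at hpq
      omega
  · intro h
    exact ⟨⟨0, by omega⟩, ⟨i, by omega⟩, ⟨k, by omega⟩, ⟨n + 2, by omega⟩,
      by simp only [Fin.mk_lt_mk]; omega, by simp only [Fin.mk_lt_mk]; omega,
      by simp only [Fin.mk_lt_mk]; omega, Or.inl ⟨rfl, rfl⟩⟩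

lemma card_filter_lt (n m : ℕ) (h : m < n) :
    (Finset.univ.filter fun j : Fin n => j.val < m).card = m := by
  have he : (Finset.univ.filter fun j : Fin n => j.val < m) = Finset.Iio ⟨m, h⟩ := by
    ext j; simp [Fin.lt_def]
  rw [he, Fin.card_Iio]

open Classical in
lemma countA (n : ℕ) (hn : 1 ≤ n) (i : ℕ) (h1i : 1 ≤ i) (hin : i ≤ n) :
    (((Finset.univ.image (famA n) ∪ Finset.univ.image (famB n)).erase
        (dTop n i (by omega))).filter
        (fun e => ¬ Crosses (n+3) e (dTop n i (by omega)))).card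
      = (n - 1) + (i - 1) := by
  set A := Finset.univ.image (famA n) with hA
  set B := Finset.univ.image (famB n) with hB
  set dI := dTop n i (by omega : i ≤ n + 2) with hdI
  have hdInotB : dI ∉ B := by
    intro hmem
    obtain ⟨j, -, hj⟩ := Finset.mem_image.mp hmem
    have h0 : (⟨0, by omega⟩ : Fin (n+3)) ∈ dI := by rw [← hj]; simp [famB]
    simp only [hdI, dTop, Finset.mem_insert, Finset.mem_singleton, Fin.ext_iff] at h0
    omega
  have hdIA : dI ∈ A := by
    refine Finset.mem_image.mpr ⟨⟨i - 1, by omega⟩, Finset.mem_univ _, ?_⟩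
    ext x
    simp only [famA, dTop, hdI, Finset.mem_insert, Finset.mem_singleton, Fin.ext_iff]
    omega
  have hAinj : Function.Injective (famA n) := by
    intro j l h
    have hmem : (⟨j.val + 1, by have := j.isLt; omega⟩ : Fin (n+3)) ∈ famA n l := by
      rw [← h]; simp [famA]
    simp only [famA, Finset.mem_insert, Finset.mem_singleton, Fin.ext_iff] at hmem
    have hj := j.isLt
    have hl := l.isLt
    exact Fin.ext (by omega)
  have hBinj : Function.Injective (famB n) := by
    intro j l h
    have hmem : (⟨j.val + 2, by have := j.isLt; omega⟩ : Fin (n+3)) ∈ famB n l := by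
      rw [← h]; simp [famB]
    simp only [famB, Finset.mem_insert, Finset.mem_singleton, Fin.ext_iff] at hmem
    exact Fin.ext (by omega)
  have hdisj : Disjoint (A.erase dI) B := by
    rw [Finset.disjoint_left]
    intro x hx1 hx2
    obtain ⟨j, -, hj⟩ := Finset.mem_image.mp (Finset.mem_of_mem_erase hx1)
    obtain ⟨l, -, hl⟩ := Finset.mem_image.mp hx2
    have h0 : (⟨0, by omega⟩ : Fin (n+3)) ∈ x := by rw [← hl]; simp [famB]
    rw [← hj] at h0
    simp only [famA, Finset.mem_insert, Finset.mem_singleton, Fin.ext_iff] at h0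
    omega
  rw [Finset.erase_union_distrib, Finset.erase_eq_of_notMem hdInotB,
    Finset.filter_union]
  have hfiltA : (A.erase dI).filter (fun e => ¬ Crosses (n+3) e dI) = A.erase dI := by
    refine Finset.filter_true_of_mem ?_
    intro e he
    obtain ⟨j, -, hj⟩ := Finset.mem_image.mp (Finset.mem_of_mem_erase he)
    exact not_crosses_of_mem (x := (⟨n + 2, by omega⟩ : Fin (n+3)))
      (by rw [← hj]; simp [famA]) (by simp [hdI, dTop])
  have hiff : ∀ j ∈ (Finset.univ : Finset (Fin n)),
      (¬ Crosses (n+3) (famB n j) dI) ↔ j.val < i - 1 := by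
    intro j _
    have hjlt := j.isLt
    have hc := crosses_zero_iff n i (j.val + 2) h1i (by omega) (by omega) (by omega)
    constructor
    · intro hnc
      by_contra hlt
      exact hnc (hc.mpr (by omega))
    · intro hlt hcr
      exact absurd (hc.mp hcr) (by omega)
  have hfiltB : (B.filter (fun e => ¬ Crosses (n+3) e dI)).card = i - 1 := by
    rw [hB, Finset.filter_image, Finset.card_image_of_injective _ hBinj,
      Finset.filter_congr hiff, card_filter_lt n (i - 1) (by omega)]
  rw [Finset.card_union_of_disjoint
      (Finset.disjoint_filter_filter hdisj),
    hfiltA, hfiltB, Finset.card_erase_of_mem hdIA, hA,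
    Finset.card_image_of_injective _ hAinj, Finset.card_univ, Fintype.card_fin]

/-- The diagonal `{0, n+1}`. -/
def dZero (n : ℕ) : Finset (Fin (n+3)) := {⟨0, by omega⟩, ⟨n + 1, Nat.lt_of_lt_of_le (Nat.lt_succ_self _) (Nat.le_succ _)⟩}

open Classical in
lemma countB (n : ℕ) (hn : 1 ≤ n) :
    (((Finset.univ.image (famA n) ∪ Finset.univ.image (famB n)).erase
        (dZero n)).filter
        (fun e => ¬ Crosses (n+3) e (dZero n))).card = n - 1 := by
  set A := Finset.univ.image (famA n) with hA
  set B := Finset.univ.image (famB n) with hB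
  have hd0notA : dZero n ∉ A := by
    intro hmem
    obtain ⟨j, -, hj⟩ := Finset.mem_image.mp hmem
    have h0 : (⟨0, by omega⟩ : Fin (n+3)) ∈ famA n j := by rw [hj]; simp [dZero]
    simp only [famA, Finset.mem_insert, Finset.mem_singleton, Fin.ext_iff] at h0
    omega
  have hd0B : dZero n ∈ B := by
    refine Finset.mem_image.mpr ⟨⟨n - 1, by omega⟩, Finset.mem_univ _, ?_⟩
    ext x
    simp only [famB, dZero, Finset.mem_insert, Finset.mem_singleton, Fin.ext_iff]
    omega
  have hBinj : Function.Injective (famB n) := by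
    intro j l h
    have hmem : (⟨j.val + 2, by have := j.isLt; omega⟩ : Fin (n+3)) ∈ famB n l := by
      rw [← h]; simp [famB]
    simp only [famB, Finset.mem_insert, Finset.mem_singleton, Fin.ext_iff] at hmem
    exact Fin.ext (by omega)
  rw [Finset.erase_union_distrib, Finset.erase_eq_of_notMem hd0notA,
    Finset.filter_union]
  have hfiltA : A.filter (fun e => ¬ Crosses (n+3) e (dZero n)) = ∅ := by
    rw [Finset.filter_eq_empty_iff]
    intro e he
    obtain ⟨j, -, hj⟩ := Finset.mem_image.mp he
    simp only [not_not]
    rw [← hj]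
    have hjlt := j.isLt
    exact crosses_comm
      ((crosses_zero_iff n (j.val + 1) (n + 1) (by omega) (by omega) (by omega)
        (by omega)).mpr (by omega))
  have hfiltB : (B.erase (dZero n)).filter (fun e => ¬ Crosses (n+3) e (dZero n))
      = B.erase (dZero n) := by
    refine Finset.filter_true_of_mem ?_
    intro e he
    obtain ⟨j, -, hj⟩ := Finset.mem_image.mp (Finset.mem_of_mem_erase he)
    exact not_crosses_of_mem (x := (⟨0, by omega⟩ : Fin (n+3)))
      (by rw [← hj]; simp [famB]) (by simp [dZero])
  rw [hfiltA, hfiltB, Finset.empty_union, Finset.card_erase_of_mem hd0B, hB,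
    Finset.card_image_of_injective _ hBinj, Finset.card_univ, Fintype.card_fin]

open Classical in
/-- Let `D` be the `2n` diagonals `{i, n+2}` (`1 ≤ i ≤ n`)
and `{0, i+1}` (`1 ≤ i ≤ n`) of the `(n+3)`-gon. Each of `{1, n+2}` and
`{0, n+1}` is non-crossing with exactly `n−1` other elements of `D`; more
generally `{i, n+2}` is non-crossing with exactly `(n−1)+(i−1)` other elements
of `D`. -/
theorem special_diagonals_noncrossing_count (n : ℕ) (hn : 1 ≤ n)
    (D : Finset (Finset (Fin (n+3))))
    (hD : D =
      (Finset.univ.image (fun i : Fin n =>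
        ({⟨i.val + 1, by have := i.isLt; omega⟩, ⟨n + 2, by omega⟩} :
          Finset (Fin (n+3))))) ∪
      (Finset.univ.image (fun i : Fin n =>
        ({⟨0, by omega⟩, ⟨i.val + 2, by have := i.isLt; omega⟩} :
          Finset (Fin (n+3)))))) :
    (((D.erase ({⟨1, by omega⟩, ⟨n + 2, by omega⟩} : Finset (Fin (n+3)))).filter
        (fun e => ¬ Crosses (n+3) e
          ({⟨1, by omega⟩, ⟨n + 2, by omega⟩} : Finset (Fin (n+3))))).card
      = n - 1) ∧
    (((D.erase ({⟨0, by omega⟩, ⟨n + 1, by omega⟩} : Finset (Fin (n+3)))).filter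
        (fun e => ¬ Crosses (n+3) e
          ({⟨0, by omega⟩, ⟨n + 1, by omega⟩} : Finset (Fin (n+3))))).card
      = n - 1) ∧
    (∀ i : ℕ, ∀ _ : 1 ≤ i, ∀ hi : i ≤ n,
      ((D.erase ({⟨i, by omega⟩, ⟨n + 2, by omega⟩} : Finset (Fin (n+3)))).filter
        (fun e => ¬ Crosses (n+3) e
          ({⟨i, by omega⟩, ⟨n + 2, by omega⟩} : Finset (Fin (n+3))))).card
      = (n - 1) + (i - 1)) := by
  subst hD
  refine ⟨?_, ?_, ?_⟩
  · have h := countA n hn 1 le_rfl hn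
    exact h
  · exact countB n hn
  · intro i h1 hi
    exact countA n hn i h1 hi
end
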